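/- arXiv:2403.04944 — 9 statements merged into one kernel-verified Lean document; each statement's English description precedes it below -/
import Mathlib

section
/- For a, b, w > 0, q ∈ (0,1] with q²w ≤ a, and all t ∈ ℝ, the point (x(t), y(t)) with x(t) = -q²w·sin²t + cos t·√(a² - q⁴w²·sin²t) and y(t) = qb·sin t satisfies 2q²w·x(t)·y(t)² + q²b²·x(t)² + (a² + q⁴w²)·y(t)² - a²b²q² = 0. -/
open Real

theorem parametrization_on_curve (a b w q : ℝ) (ha : 0 < a) (hb : 0 < b)
    (hw : 0 < w) (hq0 : 0 < q) (hq1 : q ≤ 1) (hqa : q ^ 2 * w ≤ a) (t : ℝ) :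
    let x := -q ^ 2 * w * sin t ^ 2 + cos t * Real.sqrt (a ^ 2 - q ^ 4 * w ^ 2 * sin t ^ 2)
    let y := q * b * sin t
    2 * q ^ 2 * w * x * y ^ 2 + q ^ 2 * b ^ 2 * x ^ 2
      + (a ^ 2 + q ^ 4 * w ^ 2) * y ^ 2 - a ^ 2 * b ^ 2 * q ^ 2 = 0 := by
  intro x y
  have hqw : 0 ≤ q ^ 2 * w := by positivity
  have hnn : 0 ≤ a ^ 2 - q ^ 4 * w ^ 2 * sin t ^ 2 := by
    nlinarith [sin_sq_le_one t, sq_nonneg (sin t), mul_nonneg (mul_nonneg hqw hqw) (sq_nonneg (sin t)), sq_nonneg (q ^ 2 * w)]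
  have hs2 : Real.sqrt (a ^ 2 - q ^ 4 * w ^ 2 * sin t ^ 2) ^ 2
      = a ^ 2 - q ^ 4 * w ^ 2 * sin t ^ 2 := Real.sq_sqrt hnn
  have hpy : cos t ^ 2 = 1 - sin t ^ 2 := by
    have := sin_sq_add_cos_sq t; linarith
  simp only [x, y]
  linear_combination q ^ 2 * b ^ 2 * cos t ^ 2 * hs2
    + q ^ 2 * b ^ 2 * (a ^ 2 - q ^ 4 * w ^ 2 * sin t ^ 2) * hpy
end

section
/- Let a, b, w > 0, q ∈ (0,1] with k = q²w/a ∈ (0,1). Define A_{q,2} = -2∫₀^{π/2} y(t)x'(t) dt and A_{q,1} = -2∫_{π/2}^{π} y(t)x'(t) dt for the parametrization x(t) = -q²w sin²t + cos t√(a² - q⁴w² sin²t), y(t) = qb sin t. Then A_{q,2} - A_{q,1} = (8/3)·a·b·q·k = (8/3)·w·b·q³. -/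
open Real

theorem area_difference (a b w q k : ℝ) (ha : 0 < a) (hb : 0 < b) (hw : 0 < w)
    (hq0 : 0 < q) (hq1 : q ≤ 1) (hk : k = q ^ 2 * w / a) (hk0 : 0 < k) (hk1 : k < 1) :
    let x : ℝ → ℝ := fun t =>
      -q ^ 2 * w * sin t ^ 2 + cos t * Real.sqrt (a ^ 2 - q ^ 4 * w ^ 2 * sin t ^ 2)
    let y : ℝ → ℝ := fun t => q * b * sin t
    (-2 * ∫ t in (0:ℝ)..(π / 2), y t * deriv x t)
      - (-2 * ∫ t in (π / 2)..π, y t * deriv x t)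
      = 8 / 3 * a * b * q * k
    ∧ (-2 * ∫ t in (0:ℝ)..(π / 2), y t * deriv x t)
      - (-2 * ∫ t in (π / 2)..π, y t * deriv x t)
      = 8 / 3 * w * b * q ^ 3 := by
  intro x y
  have hca : q ^ 2 * w < a := by
    have : k * a = q ^ 2 * w := by rw [hk]; field_simp
    nlinarith
  have hc0 : 0 < q ^ 2 * w := by positivity
  -- positivity of the expression under the sqrt
  have hg : ∀ t : ℝ, 0 < a ^ 2 - q ^ 4 * w ^ 2 * sin t ^ 2 := by
    intro t
    have h1 : sin t ^ 2 ≤ 1 := sin_sq_le_one t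
    have h2 : 0 ≤ sin t ^ 2 := sq_nonneg _
    have h3 : q ^ 4 * w ^ 2 < a ^ 2 := by nlinarith
    nlinarith [mul_le_mul_of_nonneg_left h1 (le_of_lt (by positivity : (0:ℝ) < q ^ 4 * w ^ 2))]
  set g : ℝ → ℝ := fun t => a ^ 2 - q ^ 4 * w ^ 2 * sin t ^ 2 with hgdef
  have hsqpos : ∀ t : ℝ, 0 < Real.sqrt (g t) := fun t => Real.sqrt_pos.2 (hg t)
  set xd : ℝ → ℝ := fun t =>
    -q ^ 2 * w * (2 * sin t * cos t) +
      ((-sin t) * Real.sqrt (g t) +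
        cos t * (-(q ^ 4 * w ^ 2 * (2 * sin t * cos t)) / (2 * Real.sqrt (g t)))) with hxddef
  have hx' : ∀ t : ℝ, HasDerivAt x (xd t) t := by
    intro t
    have h1 : HasDerivAt g (-(q ^ 4 * w ^ 2 * (2 * sin t * cos t))) t := by
      have := (hasDerivAt_const t (a ^ 2)).sub (((hasDerivAt_sin t).pow 2).const_mul
        (q ^ 4 * w ^ 2))
      refine this.congr_deriv ?_
      push_cast
      ring
    have h2 : HasDerivAt (fun s => Real.sqrt (g s))
        (-(q ^ 4 * w ^ 2 * (2 * sin t * cos t)) / (2 * Real.sqrt (g t))) t :=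
      h1.sqrt (ne_of_gt (hg t))
    have h3 := (hasDerivAt_cos t).mul h2
    have h4 := ((hasDerivAt_sin t).pow 2).const_mul (-q ^ 2 * w)
    have h5 := h4.add h3
    have hxe : x = fun s => -q ^ 2 * w * sin s ^ 2 + cos s * Real.sqrt (g s) := rfl
    rw [hxe]
    refine h5.congr_deriv ?_
    push_cast
    ring
  have hxd : deriv x = xd := funext fun t => (hx' t).deriv
  have hy : y = fun t => q * b * sin t := rfl
  set f : ℝ → ℝ := fun t => q * b * sin t * xd t with hfdef
  -- continuity
  have hgc : Continuous g := by fun_prop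
  have hsqc : Continuous fun t => Real.sqrt (g t) := hgc.sqrt
  have hden : ∀ t : ℝ, 2 * Real.sqrt (g t) ≠ 0 := fun t => by
    have := hsqpos t; positivity
  have hxdc : Continuous xd := by
    apply Continuous.add
    · fun_prop
    · apply Continuous.add
      · exact continuous_sin.neg.mul hsqc
      · exact continuous_cos.mul (Continuous.div (by fun_prop) (by fun_prop) hden)
  have hfc : Continuous f := by fun_prop
  have hfc2 : Continuous fun t => f (π - t) := hfc.comp (by fun_prop)
  -- reflection of the second integral
  have hI2 : ∫ t in (0:ℝ)..(π / 2), f (π - t) = ∫ t in (π / 2)..π, f t := by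
    rw [intervalIntegral.integral_comp_sub_left f π]
    norm_num
    congr 1
    ring
  -- pointwise difference
  have hpt : ∀ t : ℝ, f t - f (π - t) = -(4 * q ^ 3 * w * b) * (sin t ^ 2 * cos t) := by
    intro t
    have hgsym : g (π - t) = g t := by simp [hgdef, sin_pi_sub]
    simp only [hfdef, hxddef, sin_pi_sub, cos_pi_sub, hgsym]
    have hd := hden t
    field_simp
    ring
  -- the elementary integral
  have hsin3 : ∫ t in (0:ℝ)..(π / 2), sin t ^ 2 * cos t = 1 / 3 := by
    have hF : ∀ t ∈ Set.uIcc (0:ℝ) (π / 2),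
        HasDerivAt (fun s => sin s ^ 3 / 3) (sin t ^ 2 * cos t) t := by
      intro t _
      have := ((hasDerivAt_sin t).pow 3).div_const 3
      refine this.congr_deriv ?_
      push_cast
      ring
    rw [intervalIntegral.integral_eq_sub_of_hasDerivAt hF (((continuous_sin.pow 2).mul continuous_cos).intervalIntegrable _ _)]
    simp [sin_pi_div_two]
  have hdiff : (∫ t in (0:ℝ)..(π / 2), f t) - (∫ t in (π / 2)..π, f t)
      = -(4 * q ^ 3 * w * b) * (1 / 3) := by
    rw [← hI2, ← intervalIntegral.integral_sub (hfc.intervalIntegrable _ _)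
      (hfc2.intervalIntegrable _ _)]
    rw [intervalIntegral.integral_congr (g := fun t => -(4 * q ^ 3 * w * b) * (sin t ^ 2 * cos t))
      (fun t _ => hpt t)]
    rw [intervalIntegral.integral_const_mul, hsin3]
  rw [hxd, hy]
  have hgoal : (-2 * ∫ t in (0:ℝ)..(π / 2), f t) - (-2 * ∫ t in (π / 2)..π, f t)
      = 8 / 3 * w * b * q ^ 3 := by
    have := hdiff
    nlinarith [hdiff]
  constructor
  · rw [hk]
    have : 8 / 3 * a * b * q * (q ^ 2 * w / a) = 8 / 3 * w * b * q ^ 3 := by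
      field_simp
    rw [this]
    exact hgoal
  · exact hgoal
end

section
/- Let a, b, w > 0, q ∈ (0,1] with k = q²w/a ∈ (0,1). The total area A = -2∫₀^{π} y(t)x'(t) dt of the egg-shaped Hügelschäffer curve parametrized by x(t) = -q²w sin²t + cos t√(a² - q⁴w² sin²t), y(t) = qb sin t equals (4/3)·a·b·q·((1 - 1/k²)·K(k) + (1 + 1/k²)·E(k)). -/
open Real

noncomputable def ellipticK (k : ℝ) : ℝ := ∫ θ in (0:ℝ)..(π / 2), 1 / Real.sqrt (1 - k ^ 2 * sin θ ^ 2)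

noncomputable def ellipticE (k : ℝ) : ℝ := ∫ θ in (0:ℝ)..(π / 2), Real.sqrt (1 - k ^ 2 * sin θ ^ 2)


lemma delta_pos {k : ℝ} (hk0 : 0 < k) (hk1 : k < 1) (θ : ℝ) :
    0 < 1 - k ^ 2 * sin θ ^ 2 := by
  nlinarith [sin_sq_le_one θ, sq_nonneg (sin θ), sq_nonneg k]

lemma delta_cont {k : ℝ} (hk0 : 0 < k) (hk1 : k < 1) :
    Continuous (fun θ : ℝ => Real.sqrt (1 - k ^ 2 * sin θ ^ 2)) := by
  fun_prop

lemma delta_sqrt_pos {k : ℝ} (hk0 : 0 < k) (hk1 : k < 1) (θ : ℝ) :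
    0 < Real.sqrt (1 - k ^ 2 * sin θ ^ 2) :=
  Real.sqrt_pos.mpr (delta_pos hk0 hk1 θ)

lemma key_deriv {k : ℝ} (hk0 : 0 < k) (hk1 : k < 1) (θ : ℝ) :
    HasDerivAt (fun θ => sin θ * cos θ * Real.sqrt (1 - k ^ 2 * sin θ ^ 2))
      (3 * (cos θ ^ 2 * Real.sqrt (1 - k ^ 2 * sin θ ^ 2))
        - (1 + k ^ 2) / k ^ 2 * Real.sqrt (1 - k ^ 2 * sin θ ^ 2)
        + (1 - k ^ 2) / k ^ 2 * (1 / Real.sqrt (1 - k ^ 2 * sin θ ^ 2))) θ := by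
  have hΔpos := delta_sqrt_pos hk0 hk1 θ
  have hpos := delta_pos hk0 hk1 θ
  have hinner : HasDerivAt (fun θ : ℝ => 1 - k ^ 2 * sin θ ^ 2)
      (-(k ^ 2 * (2 * sin θ * cos θ))) θ := by
    have := ((hasDerivAt_sin θ).pow 2).const_mul (k ^ 2)
    simpa using (this.const_sub 1)
  have hsqrt := hinner.sqrt (ne_of_gt hpos)
  have hsc : HasDerivAt (fun θ : ℝ => sin θ * cos θ)
      (cos θ * cos θ + sin θ * (-sin θ)) θ :=
    (hasDerivAt_sin θ).mul (hasDerivAt_cos θ)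
  have h := hsc.mul hsqrt
  refine h.congr_deriv ?_; symm
  have hΔsq : Real.sqrt (1 - k ^ 2 * sin θ ^ 2) ^ 2 = 1 - k ^ 2 * sin θ ^ 2 :=
    Real.sq_sqrt hpos.le
  have hsin : sin θ ^ 2 = 1 - cos θ ^ 2 := by
    have := sin_sq_add_cos_sq θ; linarith
  field_simp
  linear_combination (2*cos θ^2*k^2 + k^2*sin θ^2 - 1 - k^2) * hΔsq
    + (2*k^2 - k^4*sin θ^2) * hsin

lemma key_int {k : ℝ} (hk0 : 0 < k) (hk1 : k < 1) :
    (∫ θ in (0:ℝ)..(π/2), cos θ ^ 2 * Real.sqrt (1 - k ^ 2 * sin θ ^ 2))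
      = ((1 + k ^ 2) * ellipticE k - (1 - k ^ 2) * ellipticK k) / (3 * k ^ 2) := by
  have hk2 : (k:ℝ) ^ 2 ≠ 0 := by positivity
  have hcont1 : Continuous (fun θ : ℝ => cos θ ^ 2 * Real.sqrt (1 - k ^ 2 * sin θ ^ 2)) := by
    fun_prop
  have hcont2 := delta_cont hk0 hk1
  have hcont3 : Continuous (fun θ : ℝ => 1 / Real.sqrt (1 - k ^ 2 * sin θ ^ 2)) :=
    continuous_const.div hcont2 (fun θ => ne_of_gt (delta_sqrt_pos hk0 hk1 θ))
  have hint := intervalIntegral.integral_eq_sub_of_hasDerivAt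
      (f := fun θ => sin θ * cos θ * Real.sqrt (1 - k ^ 2 * sin θ ^ 2))
      (f' := fun θ => 3 * (cos θ ^ 2 * Real.sqrt (1 - k ^ 2 * sin θ ^ 2))
        - (1 + k ^ 2) / k ^ 2 * Real.sqrt (1 - k ^ 2 * sin θ ^ 2)
        + (1 - k ^ 2) / k ^ 2 * (1 / Real.sqrt (1 - k ^ 2 * sin θ ^ 2)))
      (a := (0:ℝ)) (b := π/2)
      (fun t ht => key_deriv hk0 hk1 t)
      (((( continuous_const.mul hcont1).sub (continuous_const.mul hcont2)).add
        (continuous_const.mul hcont3)).intervalIntegrable _ _)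
  rw [intervalIntegral.integral_add (((hcont1.intervalIntegrable _ _).const_mul _).sub ((hcont2.intervalIntegrable _ _).const_mul _))
      ((hcont3.intervalIntegrable _ _).const_mul _),
    intervalIntegral.integral_sub ((hcont1.intervalIntegrable _ _).const_mul _)
      ((hcont2.intervalIntegrable _ _).const_mul _),
    intervalIntegral.integral_const_mul, intervalIntegral.integral_const_mul,
    intervalIntegral.integral_const_mul] at hint
  simp only [Real.cos_pi_div_two, Real.sin_zero, mul_zero, zero_mul, sub_zero, mul_comm] at hint
  rw [show (∫ θ in (0:ℝ)..(π/2), Real.sqrt (1 - k ^ 2 * sin θ ^ 2)) = ellipticE k from rfl,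
    show (∫ θ in (0:ℝ)..(π/2), 1 / Real.sqrt (1 - k ^ 2 * sin θ ^ 2)) = ellipticK k from rfl] at hint
  have h3 : (3:ℝ) * k ^ 2 ≠ 0 := by positivity
  field_simp at hint ⊢
  ring_nf at hint ⊢
  linarith

theorem area_egg (a b w q k : ℝ) (ha : 0 < a) (hb : 0 < b) (hw : 0 < w)
    (hq0 : 0 < q) (hq1 : q ≤ 1) (hk : k = q ^ 2 * w / a) (hk0 : 0 < k) (hk1 : k < 1) :
    let x : ℝ → ℝ := fun t =>
      -q ^ 2 * w * sin t ^ 2 + cos t * Real.sqrt (a ^ 2 - q ^ 4 * w ^ 2 * sin t ^ 2)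
    let y : ℝ → ℝ := fun t => q * b * sin t
    (-2 * ∫ t in (0:ℝ)..π, y t * deriv x t)
      = 4 / 3 * a * b * q * ((1 - 1 / k ^ 2) * ellipticK k + (1 + 1 / k ^ 2) * ellipticE k) := by
  intro x y
  have hka : k * a = q ^ 2 * w := by rw [hk]; field_simp
  have hc2 : q ^ 4 * w ^ 2 = k ^ 2 * a ^ 2 := by
    have : (q ^ 2 * w) ^ 2 = (k * a) ^ 2 := by rw [hka]
    nlinarith [this]
  -- positivity of sqrt argument
  have hpos : ∀ t : ℝ, 0 < a ^ 2 - q ^ 4 * w ^ 2 * sin t ^ 2 := by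
    intro t
    rw [hc2]
    have h1 : k ^ 2 * sin t ^ 2 ≤ k ^ 2 := by nlinarith [sin_sq_le_one t, sq_nonneg k]
    have h2 : k ^ 2 < 1 := by nlinarith
    nlinarith [mul_pos (mul_pos ha ha) (sub_pos.mpr h2),
      mul_nonneg (mul_nonneg ha.le ha.le) (sub_nonneg.mpr h1)]
  -- derivative of x
  set x' : ℝ → ℝ := fun t =>
      -q ^ 2 * w * (2 * sin t * cos t)
        + ((-sin t) * Real.sqrt (a ^ 2 - q ^ 4 * w ^ 2 * sin t ^ 2)
          + cos t * ((-(q ^ 4 * w ^ 2 * (2 * sin t * cos t)))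
              / (2 * Real.sqrt (a ^ 2 - q ^ 4 * w ^ 2 * sin t ^ 2)))) with hx'def
  have hx : ∀ t : ℝ, HasDerivAt x (x' t) t := by
    intro t
    have h1 := ((hasDerivAt_sin t).pow 2).const_mul (-q ^ 2 * w)
    have hinner := (((hasDerivAt_sin t).pow 2).const_mul (q ^ 4 * w ^ 2)).const_sub (a ^ 2)
    have hsqrt := hinner.sqrt (ne_of_gt (hpos t))
    have h2 := (hasDerivAt_cos t).mul hsqrt
    have h := h1.add h2
    refine h.congr_deriv ?_; symm
    simp only [hx'def, Pi.pow_apply]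
    push_cast
    ring
  have hderiv : deriv x = x' := funext fun t => (hx t).deriv
  -- continuity facts
  have hsne : ∀ t : ℝ, Real.sqrt (a ^ 2 - q ^ 4 * w ^ 2 * sin t ^ 2) ≠ 0 :=
    fun t => ne_of_gt (Real.sqrt_pos.mpr (hpos t))
  have hcS : Continuous (fun t : ℝ => Real.sqrt (a ^ 2 - q ^ 4 * w ^ 2 * sin t ^ 2)) := by
    fun_prop
  have hcx' : Continuous x' := by
    rw [hx'def]
    apply Continuous.add
    · fun_prop
    · apply Continuous.add
      · exact (continuous_sin.neg).mul hcS
      · exact continuous_cos.mul (Continuous.div (by fun_prop) (by fun_prop)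
          (fun t => by simpa using hsne t))
  have hcx : Continuous x := by fun_prop
  -- integration by parts
  have hibp : (∫ t in (0:ℝ)..π, sin t * x' t)
      = sin π * x π - sin 0 * x 0 - ∫ t in (0:ℝ)..π, cos t * x t := by
    apply intervalIntegral.integral_mul_deriv_eq_deriv_mul
      (fun t _ => hasDerivAt_sin t) (fun t _ => hx t)
      (continuous_cos.intervalIntegrable _ _) (hcx'.intervalIntegrable _ _)
  rw [Real.sin_pi, Real.sin_zero, zero_mul, zero_mul, sub_zero, zero_sub] at hibp
  -- split cos * x
  have hsplit : (∫ t in (0:ℝ)..π, cos t * x t)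
      = (∫ t in (0:ℝ)..π, -q ^ 2 * w * (cos t * sin t ^ 2))
        + ∫ t in (0:ℝ)..π, cos t ^ 2 * Real.sqrt (a ^ 2 - q ^ 4 * w ^ 2 * sin t ^ 2) := by
    rw [← intervalIntegral.integral_add (by apply Continuous.intervalIntegrable; fun_prop)
      (by apply Continuous.intervalIntegrable; fun_prop)]
    apply intervalIntegral.integral_congr
    intro t _
    show cos t * x t = _
    simp only [x]
    ring
  have hzero : (∫ t in (0:ℝ)..π, cos t * sin t ^ 2) = 0 := by
    have hft : ∀ t ∈ Set.uIcc (0:ℝ) π, HasDerivAt (fun t : ℝ => sin t ^ 3 / 3)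
        (cos t * sin t ^ 2) t := by
      intro t _
      have := ((hasDerivAt_sin t).pow 3).div_const 3
      refine this.congr_deriv ?_; symm
      ring
    rw [intervalIntegral.integral_eq_sub_of_hasDerivAt hft
      (by apply Continuous.intervalIntegrable; fun_prop)]
    simp
  -- symmetry: reduce to [0, π/2]
  have hhalf : (∫ t in (0:ℝ)..π, cos t ^ 2 * Real.sqrt (a ^ 2 - q ^ 4 * w ^ 2 * sin t ^ 2))
      = 2 * ∫ t in (0:ℝ)..(π/2), cos t ^ 2 * Real.sqrt (a ^ 2 - q ^ 4 * w ^ 2 * sin t ^ 2) := by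
    have hadj := intervalIntegral.integral_add_adjacent_intervals
      (a := (0:ℝ)) (b := π/2) (c := π) (μ := MeasureTheory.volume)
      (f := fun t => cos t ^ 2 * Real.sqrt (a ^ 2 - q ^ 4 * w ^ 2 * sin t ^ 2))
      (by apply Continuous.intervalIntegrable; fun_prop)
      (by apply Continuous.intervalIntegrable; fun_prop)
    have hsub := intervalIntegral.integral_comp_sub_left
      (a := (0:ℝ)) (b := π/2)
      (fun t => cos t ^ 2 * Real.sqrt (a ^ 2 - q ^ 4 * w ^ 2 * sin t ^ 2)) π
    have heq : (∫ t in (0:ℝ)..(π/2),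
        cos (π - t) ^ 2 * Real.sqrt (a ^ 2 - q ^ 4 * w ^ 2 * sin (π - t) ^ 2))
        = ∫ t in (0:ℝ)..(π/2), cos t ^ 2 * Real.sqrt (a ^ 2 - q ^ 4 * w ^ 2 * sin t ^ 2) := by
      apply intervalIntegral.integral_congr
      intro t _
      show cos (π - t) ^ 2 * Real.sqrt (a ^ 2 - q ^ 4 * w ^ 2 * sin (π - t) ^ 2)
        = cos t ^ 2 * Real.sqrt (a ^ 2 - q ^ 4 * w ^ 2 * sin t ^ 2)
      rw [Real.cos_pi_sub, Real.sin_pi_sub]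
      ring
    rw [show π - π/2 = π/2 by ring, show π - 0 = π by ring] at hsub
    rw [← hadj, ← hsub, heq]
    ring
  -- pull out a from sqrt
  have hpull : (∫ t in (0:ℝ)..(π/2), cos t ^ 2 * Real.sqrt (a ^ 2 - q ^ 4 * w ^ 2 * sin t ^ 2))
      = a * ∫ t in (0:ℝ)..(π/2), cos t ^ 2 * Real.sqrt (1 - k ^ 2 * sin t ^ 2) := by
    rw [← intervalIntegral.integral_const_mul]
    apply intervalIntegral.integral_congr
    intro t _
    show cos t ^ 2 * Real.sqrt (a ^ 2 - q ^ 4 * w ^ 2 * sin t ^ 2)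
      = a * (cos t ^ 2 * Real.sqrt (1 - k ^ 2 * sin t ^ 2))
    have harg : a ^ 2 - q ^ 4 * w ^ 2 * sin t ^ 2 = a ^ 2 * (1 - k ^ 2 * sin t ^ 2) := by
      rw [hc2]; ring
    rw [harg, Real.sqrt_mul (by positivity), Real.sqrt_sq ha.le]
    ring
  -- assemble
  have hyx : (∫ t in (0:ℝ)..π, y t * deriv x t) = q * b * ∫ t in (0:ℝ)..π, sin t * x' t := by
    rw [← intervalIntegral.integral_const_mul, hderiv]
    apply intervalIntegral.integral_congr
    intro t _
    show y t * x' t = _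
    simp only [y]
    ring
  rw [hyx, hibp, hsplit, intervalIntegral.integral_const_mul, hzero, hhalf, hpull,
    key_int hk0 hk1]
  have hk2 : (k:ℝ) ^ 2 ≠ 0 := by positivity
  field_simp
  ring
end

section
/- For x ∈ (-1,1), K(x) = (π/2)·∑_{i=0}^{∞} ((2i-1)!!/(2i)!!)²·x^{2i}, where K is the complete elliptic integral of the first kind. -/
open Real MeasureTheory

namespace EllipticSeriesAux

/-- the coefficient (2n-1)!!/(2n)!! -/
noncomputable def c (n : ℕ) : ℝ :=
  (Nat.doubleFactorial (2 * n - 1) : ℝ) / (Nat.doubleFactorial (2 * n) : ℝ)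

lemma c_zero : c 0 = 1 := by simp [c, Nat.doubleFactorial]

lemma c_pos (n : ℕ) : 0 < c n := by
  apply div_pos <;> exact_mod_cast Nat.doubleFactorial_pos _

lemma df_odd (n : ℕ) :
    (Nat.doubleFactorial (2 * (n + 1) - 1) : ℕ) =
      (2 * n + 1) * Nat.doubleFactorial (2 * n - 1) := by
  cases n with
  | zero => rfl
  | succ m =>
      have h1 : 2 * (m + 1 + 1) - 1 = (2 * (m + 1) - 1) + 2 := by omega
      have h2 : (2 * (m + 1) - 1) + 2 = 2 * (m + 1) + 1 := by omega
      rw [h1, Nat.doubleFactorial, h2]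

lemma df_even (n : ℕ) :
    (Nat.doubleFactorial (2 * (n + 1)) : ℕ) =
      (2 * n + 2) * Nat.doubleFactorial (2 * n) := by
  have h1 : 2 * (n + 1) = (2 * n) + 2 := by omega
  rw [h1, Nat.doubleFactorial]

lemma c_rec (n : ℕ) : c (n + 1) = c n * ((2 * n + 1) / (2 * n + 2)) := by
  have h1 := df_odd n
  have h2 := df_even n
  have hd : (0:ℝ) < (Nat.doubleFactorial (2 * n) : ℝ) := by
    exact_mod_cast Nat.doubleFactorial_pos _
  have hd2 : (0:ℝ) < (2 * (n:ℝ) + 2) := by positivity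
  rw [c, c, h1, h2]
  push_cast
  field_simp

lemma c_le_one (n : ℕ) : c n ≤ 1 := by
  induction n with
  | zero => rw [c_zero]
  | succ m ih =>
      rw [c_rec]
      have h1 : ((2 * m + 1 : ℝ) / (2 * m + 2)) ≤ 1 := by
        rw [div_le_one (by positivity)]; linarith
      calc c m * ((2 * m + 1 : ℝ) / (2 * m + 2)) ≤ 1 * 1 := by
            apply mul_le_mul ih h1 (by positivity) zero_le_one
        _ = 1 := by ring

lemma summable_c_pow {t : ℝ} (ht : |t| < 1) : Summable (fun n => c n * t ^ n) := by
  apply Summable.of_norm_bounded (summable_geometric_of_lt_one (abs_nonneg t) ht)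
  intro n
  rw [norm_mul, norm_pow, Real.norm_eq_abs, Real.norm_eq_abs,
    abs_of_nonneg (c_pos n).le]
  calc c n * |t| ^ n ≤ 1 * |t| ^ n := by
        apply mul_le_mul_of_nonneg_right (c_le_one n) (by positivity)
    _ = |t| ^ n := one_mul _

lemma summable_deriv_bound {r : ℝ} (hr : |r| < 1) :
    Summable (fun n : ℕ => (n : ℝ) * r ^ (n - 1)) := by
  rw [← summable_nat_add_iff 1]
  have h : Summable (fun n : ℕ => ((n : ℝ) ^ 1 * r ^ n) + r ^ n) := by
    apply Summable.add
    · exact summable_pow_mul_geometric_of_norm_lt_one 1 (by rwa [Real.norm_eq_abs])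
    · exact summable_geometric_of_norm_lt_one (by rwa [Real.norm_eq_abs])
  apply h.congr
  intro n
  push_cast
  ring_nf

lemma summable_d {t : ℝ} (ht : |t| < 1) :
    Summable (fun n : ℕ => c n * ((n : ℝ) * t ^ (n - 1))) := by
  have habs : |(|t|)| < 1 := by rwa [abs_abs]
  apply Summable.of_norm_bounded (summable_deriv_bound habs)
  intro n
  rw [norm_mul, norm_mul, norm_pow, Real.norm_eq_abs, Real.norm_eq_abs, Real.norm_eq_abs,
    abs_of_nonneg (c_pos n).le, Nat.abs_cast]
  calc c n * ((n:ℝ) * |t| ^ (n-1)) ≤ 1 * ((n:ℝ) * |t| ^ (n-1)) := by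
        apply mul_le_mul_of_nonneg_right (c_le_one n) (by positivity)
    _ = (n:ℝ) * |t| ^ (n-1) := by rw [one_mul]

/-- key series identity: the termwise derivative sum equals f/(2(1-t)) -/
lemma D_eq {t : ℝ} (ht : |t| < 1) :
    ∑' n : ℕ, c n * ((n : ℝ) * t ^ (n - 1)) =
      (∑' n : ℕ, c n * t ^ n) / (2 * (1 - t)) := by
  have hd := summable_d ht
  have hf := summable_c_pow ht
  set D := ∑' n : ℕ, c n * ((n : ℝ) * t ^ (n - 1)) with hD
  set f := ∑' n : ℕ, c n * t ^ n with hf'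
  -- shift the sum
  have h0 : D = ∑' n : ℕ, c (n + 1) * (((n : ℝ) + 1) * t ^ n) := by
    rw [hD, Summable.tsum_eq_zero_add hd]
    simp only [Nat.cast_zero, zero_mul, mul_zero, zero_add]
    congr 1
    funext n
    push_cast
    ring_nf
  -- termwise identity
  have hterm : ∀ n : ℕ, c (n + 1) * (((n : ℝ) + 1) * t ^ n) =
      (1 / 2) * (c n * t ^ n) + t * (c n * ((n : ℝ) * t ^ (n - 1))) := by
    intro n
    rw [c_rec n]
    cases n with
    | zero => simp [mul_comm]
    | succ m =>
        have : (m + 1 : ℕ) - 1 = m := rfl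
        rw [this, pow_succ]
        push_cast
        have h2 : (2 * (m:ℝ) + 2 + 2) ≠ 0 := by positivity
        field_simp
        ring
  have h1 : D = (1 / 2) * f + t * D := by
    have h2 := Summable.tsum_add (hf.mul_left (1/2)) (hd.mul_left t)
    rw [tsum_mul_left, tsum_mul_left] at h2
    calc D = ∑' n : ℕ, c (n + 1) * (((n : ℝ) + 1) * t ^ n) := h0
      _ = ∑' n : ℕ, ((1 / 2) * (c n * t ^ n) + t * (c n * ((n : ℝ) * t ^ (n - 1)))) :=
          tsum_congr hterm
      _ = (1 / 2) * f + t * D := h2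
  have hne : 1 - t ≠ 0 := by
    have := abs_lt.mp ht
    intro h; linarith [this.2]
  field_simp
  linarith [h1]

lemma hasDerivAt_f {r : ℝ} (hr0 : 0 < r) (hr1 : r < 1) {y : ℝ} (hy : y ∈ Set.Ioo (-r) r) :
    HasDerivAt (fun z => ∑' n : ℕ, c n * z ^ n)
      (∑' n : ℕ, c n * ((n : ℝ) * y ^ (n - 1))) y := by
  have habsr : |r| < 1 := by rwa [abs_of_pos hr0]
  refine hasDerivAt_tsum_of_isPreconnected (summable_deriv_bound habsr)
    isOpen_Ioo (convex_Ioo _ _).isPreconnected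
    (fun n z _ => (hasDerivAt_pow n z).const_mul (c n)) ?_ (y₀ := 0)
    ⟨by linarith, hr0⟩ (summable_c_pow (t := 0) (by simp)) hy
  · intro n z hz
    have hzr : |z| ≤ r := by
      rw [abs_le]; exact ⟨hz.1.le, hz.2.le⟩
    rw [norm_mul, norm_mul, norm_pow, Real.norm_eq_abs, Real.norm_eq_abs, Real.norm_eq_abs,
      abs_of_nonneg (c_pos n).le, Nat.abs_cast]
    calc c n * ((n:ℝ) * |z| ^ (n-1)) ≤ 1 * ((n:ℝ) * r ^ (n-1)) := by
          apply mul_le_mul (c_le_one n) _ (by positivity) zero_le_one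
          apply mul_le_mul_of_nonneg_left _ (Nat.cast_nonneg n)
          exact pow_le_pow_left₀ (abs_nonneg z) hzr _
      _ = (n:ℝ) * r ^ (n-1) := one_mul _

lemma hasSum_inv_sqrt {t : ℝ} (h0 : 0 ≤ t) (h1 : t < 1) :
    HasSum (fun n : ℕ => c n * t ^ n) (1 / Real.sqrt (1 - t)) := by
  have habs : |t| < 1 := by rwa [abs_of_nonneg h0]
  have hsum := summable_c_pow habs
  set r : ℝ := (t + 1) / 2 with hr
  have hr0 : 0 < r := by rw [hr]; linarith
  have hr1 : r < 1 := by rw [hr]; linarith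
  have htr : t < r := by rw [hr]; linarith
  -- F is constant on [0, t]
  set F : ℝ → ℝ := fun y => Real.sqrt (1 - y) * ∑' n : ℕ, c n * y ^ n with hF
  have hderiv : ∀ y ∈ Set.Icc (0:ℝ) t, HasDerivAt F 0 y := by
    intro y hy
    have hy1 : y < 1 := lt_of_le_of_lt hy.2 h1
    have hyr : y ∈ Set.Ioo (-r) r := ⟨by linarith [hy.1], lt_of_le_of_lt hy.2 htr⟩
    have hys : (0:ℝ) < 1 - y := by linarith
    have habsy : |y| < 1 := by rw [abs_of_nonneg hy.1]; exact hy1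
    have hd1 : HasDerivAt (fun z => Real.sqrt (1 - z)) (1 / (2 * Real.sqrt (1 - y)) * (-1)) y :=
      (Real.hasDerivAt_sqrt (ne_of_gt hys)).comp y ((hasDerivAt_id y).const_sub 1)
    have hd2 := hasDerivAt_f hr0 hr1 hyr
    have := hd1.mul hd2
    refine this.congr_deriv ?_
    symm
    rw [D_eq habsy]
    have hs : Real.sqrt (1 - y) > 0 := Real.sqrt_pos.mpr hys
    have hsq : Real.sqrt (1 - y) ^ 2 = 1 - y := Real.sq_sqrt hys.le
    set S := ∑' n : ℕ, c n * y ^ n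
    rw [← hsq]
    field_simp
    rw [Real.sqrt_sq hs.le]
    ring
  have hconst := constant_of_has_deriv_right_zero
    (f := F) (a := 0) (b := t)
    (fun y hy => (hderiv y hy).continuousAt.continuousWithinAt)
    (fun y hy => ((hderiv y (Set.Ico_subset_Icc_self hy)).hasDerivWithinAt))
    t (Set.right_mem_Icc.mpr h0)
  have hF0 : F 0 = 1 := by
    rw [hF]
    simp only [sub_zero, Real.sqrt_one, one_mul]
    rw [tsum_eq_single 0 (fun n hn => by simp [zero_pow hn])]
    simp [c_zero]
  rw [hF0] at hconst
  have hs : Real.sqrt (1 - t) > 0 := Real.sqrt_pos.mpr (by linarith)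
  have hval : ∑' n : ℕ, c n * t ^ n = 1 / Real.sqrt (1 - t) := by
    rw [eq_div_iff (ne_of_gt hs), mul_comm]
    exact hconst
  exact hval ▸ hsum.hasSum

lemma integral_sin_pow_halfpi (n : ℕ) :
    ∫ θ in (0:ℝ)..(π/2), sin θ ^ (2 * n) = π / 2 * c n := by
  induction n with
  | zero =>
      simp [c_zero]
  | succ m ih =>
      have h := integral_sin_pow (a := 0) (b := π/2) (2 * m)
      have h2 : 2 * (m + 1) = 2 * m + 2 := by ring
      rw [h2, h, Real.sin_zero, Real.cos_pi_div_two, ih, c_rec]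
      push_cast
      ring

end EllipticSeriesAux

open EllipticSeriesAux in

theorem ellipticK_series (x : ℝ) (hx : x ∈ Set.Ioo (-1:ℝ) 1) :
    HasSum (fun i : ℕ =>
        π / 2 * ((Nat.doubleFactorial (2 * i - 1) : ℝ) / (Nat.doubleFactorial (2 * i))) ^ 2
          * x ^ (2 * i))
      (ellipticK x) := by
  obtain ⟨hx1, hx2⟩ := hx
  have hx2' : x ^ 2 < 1 := by nlinarith
  have hle : (0:ℝ) ≤ π / 2 := by positivity
  set μ := volume.restrict (Set.Ioc (0:ℝ) (π/2)) with hμ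
  set F : ℕ → ℝ → ℝ := fun i θ => c i * x ^ (2*i) * sin θ ^ (2*i) with hFdef
  have hnn : ∀ i θ, 0 ≤ F i θ := by
    intro i θ
    apply mul_nonneg (mul_nonneg (c_pos i).le _)
    · rw [pow_mul]; exact pow_nonneg (sq_nonneg _) _
    · rw [pow_mul]; exact pow_nonneg (sq_nonneg _) _
  have hFint : ∀ i, Integrable (F i) μ := by
    intro i
    exact (Continuous.integrableOn_Ioc (by fun_prop))
  have hpt : ∀ θ : ℝ, HasSum (fun i => F i θ) (1 / Real.sqrt (1 - x ^ 2 * sin θ ^ 2)) := by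
    intro θ
    have h0 : 0 ≤ x ^ 2 * sin θ ^ 2 := by positivity
    have h1 : x ^ 2 * sin θ ^ 2 < 1 := by
      nlinarith [Real.sin_sq_le_one θ, sq_nonneg x, sq_nonneg (sin θ)]
    have h := hasSum_inv_sqrt h0 h1
    have heq : (fun n : ℕ => c n * (x ^ 2 * sin θ ^ 2) ^ n) = fun i => F i θ := by
      funext i
      rw [hFdef]
      simp only [mul_pow, ← pow_mul]
      ring_nf
    exact heq ▸ h
  have hIval : ∀ i, ∫ θ, F i θ ∂μ = π/2 * (c i) ^ 2 * x ^ (2*i) := by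
    intro i
    have h1 : ∫ θ, F i θ ∂μ = ∫ θ in (0:ℝ)..(π/2), F i θ := by
      rw [intervalIntegral.integral_of_le hle]
    rw [h1, hFdef]
    simp only
    rw [intervalIntegral.integral_const_mul, integral_sin_pow_halfpi]
    ring
  have hnorm : Summable (fun i => ∫ θ, ‖F i θ‖ ∂μ) := by
    have heqn : (fun i => ∫ θ, ‖F i θ‖ ∂μ) = fun i => π/2 * (c i) ^ 2 * x ^ (2*i) := by
      funext i
      rw [← hIval i]
      apply integral_congr_ae
      filter_upwards with θ
      exact Real.norm_of_nonneg (hnn i θ)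
    rw [heqn]
    apply Summable.of_nonneg_of_le _ _
      ((summable_geometric_of_lt_one (sq_nonneg x) hx2').mul_left (π/2))
    · intro i
      have := c_pos i
      have h2 : (0:ℝ) ≤ x ^ (2*i) := by rw [pow_mul]; exact pow_nonneg (sq_nonneg _) _
      positivity
    · intro i
      rw [pow_mul]
      have hc1 : (c i) ^ 2 ≤ 1 := pow_le_one₀ (c_pos i).le (c_le_one i)
      have h2 : (0:ℝ) ≤ (x ^ 2) ^ i := pow_nonneg (sq_nonneg _) _
      calc π/2 * (c i) ^ 2 * (x^2) ^ i ≤ π/2 * 1 * (x^2) ^ i := by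
            apply mul_le_mul_of_nonneg_right _ h2
            apply mul_le_mul_of_nonneg_left hc1 (by positivity)
        _ = π/2 * (x^2) ^ i := by ring
  have key := MeasureTheory.hasSum_integral_of_summable_integral_norm hFint hnorm
  have hval : ∫ θ, (∑' i, F i θ) ∂μ = ellipticK x := by
    have h1 : (fun θ => ∑' i, F i θ) = fun θ => 1 / Real.sqrt (1 - x ^ 2 * sin θ ^ 2) :=
      funext fun θ => (hpt θ).tsum_eq
    rw [h1, ellipticK, intervalIntegral.integral_of_le hle]
  rw [hval] at key
  have hfun : (fun i => ∫ θ, F i θ ∂μ) = (fun i : ℕ =>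
      π / 2 * ((Nat.doubleFactorial (2 * i - 1) : ℝ) / (Nat.doubleFactorial (2 * i))) ^ 2
        * x ^ (2 * i)) := by
    funext i
    rw [hIval i]
    rfl
  rwa [hfun] at key
end

section
/- The series ∑_{i=1}^{∞} ((2i-1)!!/(2i)!!)²/(2i-1) converges and equals 1 - 2/π. -/
open Real Filter Finset Topology

noncomputable def wc (n : ℕ) : ℝ :=
  (2 * n + 1) * ((Nat.doubleFactorial (2 * n - 1) : ℝ) / (Nat.doubleFactorial (2 * n))) ^ 2

lemma df_ne (n : ℕ) : (Nat.doubleFactorial n : ℝ) ≠ 0 := by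
  exact_mod_cast (Nat.doubleFactorial_pos n).ne'

lemma wc_mul_W (n : ℕ) : wc n * Real.Wallis.W n = 1 := by
  induction n with
  | zero => simp [wc, Real.Wallis.W]
  | succ k ih =>
    rw [Real.Wallis.W_succ]
    have h1 : (2 * (k + 1) - 1) = 2 * k + 1 := by omega
    have h2 : (2 * (k + 1)) = 2 * k + 2 := by omega
    have hd1 : (Nat.doubleFactorial (2 * k + 1) : ℝ)
        = (2 * k + 1) * Nat.doubleFactorial (2 * k - 1) := by
      cases k with
      | zero => simp [Nat.doubleFactorial]
      | succ m =>
        have : 2 * (m + 1) + 1 = (2 * m + 1) + 2 := by omega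
        rw [this, Nat.doubleFactorial]
        have : 2 * (m + 1) - 1 = 2 * m + 1 := by omega
        rw [this]; push_cast; ring
    have hd2 : (Nat.doubleFactorial (2 * k + 2) : ℝ)
        = (2 * k + 2) * Nat.doubleFactorial (2 * k) := by
      rw [show 2 * k + 2 = (2 * k) + 2 from rfl, Nat.doubleFactorial]; push_cast; ring
    unfold wc at ih ⊢
    rw [h1, h2, hd1, hd2]
    have hA := df_ne (2 * k - 1)
    have hB := df_ne (2 * k)
    have e1 : (2 * ((k:ℝ) + 1) + 1) = 2 * k + 3 := by push_cast; ring
    field_simp at ih ⊢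
    push_cast at ih ⊢
    linear_combination (2*(k:ℝ)+3) * ih

lemma wc_eq_inv (n : ℕ) : wc n = (Real.Wallis.W n)⁻¹ := by
  have := wc_mul_W n
  field_simp [(Real.Wallis.W_pos n).ne'] at this ⊢
  linarith

theorem series_one_sub_two_div_pi :
    HasSum (fun i : ℕ =>
        ((Nat.doubleFactorial (2 * i + 1) : ℝ) / (Nat.doubleFactorial (2 * i + 2))) ^ 2
          / (2 * (i : ℝ) + 1))
      (1 - 2 / π) := by
  have hnn : ∀ i : ℕ, 0 ≤ ((Nat.doubleFactorial (2 * i + 1) : ℝ) / (Nat.doubleFactorial (2 * i + 2))) ^ 2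
          / (2 * (i : ℝ) + 1) := by
    intro i; positivity
  rw [hasSum_iff_tendsto_nat_of_nonneg hnn]
  have hstep : ∀ i : ℕ,
      ((Nat.doubleFactorial (2 * i + 1) : ℝ) / (Nat.doubleFactorial (2 * i + 2))) ^ 2
          / (2 * (i : ℝ) + 1) = wc i - wc (i + 1) := by
    intro i
    have hd1 : (Nat.doubleFactorial (2 * i + 1) : ℝ)
        = (2 * i + 1) * Nat.doubleFactorial (2 * i - 1) := by
      cases i with
      | zero => simp [Nat.doubleFactorial]
      | succ m =>
        have : 2 * (m + 1) + 1 = (2 * m + 1) + 2 := by omega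
        rw [this, Nat.doubleFactorial]
        have : 2 * (m + 1) - 1 = 2 * m + 1 := by omega
        rw [this]; push_cast; ring
    have hd2 : (Nat.doubleFactorial (2 * i + 2) : ℝ)
        = (2 * i + 2) * Nat.doubleFactorial (2 * i) := by
      rw [show 2 * i + 2 = (2 * i) + 2 from rfl, Nat.doubleFactorial]; push_cast; ring
    unfold wc
    have h1 : (2 * (i + 1) - 1) = 2 * i + 1 := by omega
    have h2 : (2 * (i + 1)) = 2 * i + 2 := by omega
    rw [h1, h2, hd1, hd2]
    have hA := df_ne (2 * i - 1)
    have hB := df_ne (2 * i)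
    have h3 : (2 * (i : ℝ) + 1) ≠ 0 := by positivity
    have h4 : (2 * (i : ℝ) + 2) ≠ 0 := by positivity
    push_cast
    field_simp
    ring
  have hsum : ∀ N : ℕ, (∑ i ∈ range N,
      ((Nat.doubleFactorial (2 * i + 1) : ℝ) / (Nat.doubleFactorial (2 * i + 2))) ^ 2
          / (2 * (i : ℝ) + 1)) = 1 - wc N := by
    intro N
    have := Finset.sum_range_sub' wc N
    simp only [hstep]
    rw [this]
    simp [wc, Nat.doubleFactorial]
  simp only [hsum]
  have hW : Tendsto (fun N => wc N) atTop (𝓝 (2 / π)) := by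
    simp only [wc_eq_inv]
    have := (Real.Wallis.tendsto_W_nhds_pi_div_two).inv₀ (by positivity : (π/2 : ℝ) ≠ 0)
    convert this using 2
    rw [inv_div]
  simpa using hW.const_sub 1
end

section
/- For x ∈ (-1,1), x ≠ 0, define D(x) = (K(x) - E(x))/x². Then D(x) = π·∑_{i=0}^{∞} ((i+1)/(2i+1))·((2i+1)!!/(2i+2)!!)²·x^{2i}. -/
open Real

noncomputable def dcf : ℕ → ℝ
  | 0 => 1
  | (n+1) => dcf n * (2*n+1) / (2*n+2)

lemma dcf_pos (n : ℕ) : 0 < dcf n := by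
  induction n with
  | zero => norm_num [dcf]
  | succ n ih => simp only [dcf]; positivity

lemma dcf_le_one (n : ℕ) : dcf n ≤ 1 := by
  induction n with
  | zero => norm_num [dcf]
  | succ n ih =>
    simp only [dcf]
    have h1 : dcf n * (2*n+1) / (2*n+2) ≤ dcf n := by
      rw [div_le_iff₀ (by positivity)]
      have := dcf_pos n
      nlinarith
    linarith

lemma dcf_succ_eq (n : ℕ) :
    dcf (n+1) = (Nat.doubleFactorial (2*n+1) : ℝ) / (Nat.doubleFactorial (2*n+2)) := by
  induction n with
  | zero => norm_num [dcf, Nat.doubleFactorial]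
  | succ n ih =>
    have h1 : 2*(n+1)+1 = (2*n+1)+2 := by ring
    have h2 : 2*(n+1)+2 = (2*n+2)+2 := by ring
    simp only [dcf]
    rw [show dcf n * (2*(n:ℝ)+1) / (2*(n:ℝ)+2) = dcf (n+1) from rfl, ih, h1, h2, Nat.doubleFactorial_add_two (2*n+1), Nat.doubleFactorial_add_two (2*n+2)]
    have p1 : (0:ℝ) < Nat.doubleFactorial (2*n+2) := by positivity
    rw [Nat.cast_mul, Nat.cast_mul]
    generalize ((Nat.doubleFactorial (2*n+1)) : ℝ) = a at *
    generalize ((Nat.doubleFactorial (2*n+2)) : ℝ) = b at *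
    push_cast
    field_simp
    ring

lemma abs_dcf_term_le {t : ℝ} (n : ℕ) (r : ℝ) (h : |t| ≤ r) :
    ‖dcf n * t^n‖ ≤ r^n := by
  rw [norm_mul, norm_pow, Real.norm_eq_abs, Real.norm_eq_abs, abs_of_pos (dcf_pos n)]
  calc dcf n * |t|^n ≤ 1 * |t|^n := by
        apply mul_le_mul_of_nonneg_right (dcf_le_one n) (by positivity)
    _ = |t|^n := one_mul _
    _ ≤ r^n := pow_le_pow_left₀ (abs_nonneg t) h n

lemma summable_dcf_pow {t : ℝ} (ht : |t| < 1) : Summable (fun n => dcf n * t^n) :=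
  Summable.of_norm_bounded (summable_geometric_of_lt_one (abs_nonneg t) ht)
    (fun n => abs_dcf_term_le n |t| le_rfl)

lemma summable_deriv_bound {r : ℝ} (hr0 : 0 < r) (hr1 : r < 1) :
    Summable (fun n : ℕ => (n:ℝ) * r^(n-1)) := by
  rw [← summable_nat_add_iff 1]
  have h1 : Summable (fun n : ℕ => (n:ℝ) * r^n) := by
    simpa using summable_pow_mul_geometric_of_norm_lt_one 1
      (by rwa [Real.norm_eq_abs, abs_of_pos hr0] : ‖r‖ < 1)
  have h2 : Summable (fun n : ℕ => r^n) :=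
    summable_geometric_of_lt_one hr0.le hr1
  have := h1.add h2
  apply this.congr
  intro n
  simp only [Nat.add_sub_cancel]
  push_cast
  ring

lemma summable_dcf_deriv {t : ℝ} (ht : |t| < 1) :
    Summable (fun n : ℕ => dcf n * (n * t^(n-1))) := by
  apply Summable.of_norm_bounded (summable_deriv_bound (by positivity : (0:ℝ) < (|t|+1)/2) (by linarith))
  intro n
  rw [norm_mul, Real.norm_eq_abs, abs_of_pos (dcf_pos n), norm_mul, norm_pow,
    Real.norm_eq_abs, Real.norm_eq_abs, Nat.abs_cast]
  have h1 : |t|^(n-1) ≤ ((|t|+1)/2)^(n-1) := pow_le_pow_left₀ (abs_nonneg t) (by linarith) _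
  have := dcf_le_one n
  have := dcf_pos n
  have : dcf n * ((n:ℝ) * |t|^(n-1)) ≤ 1 * ((n:ℝ) * ((|t|+1)/2)^(n-1)) := by
    apply mul_le_mul (dcf_le_one n) _ (by positivity) zero_le_one
    exact mul_le_mul_of_nonneg_left h1 (Nat.cast_nonneg n)
  linarith

lemma hasDerivAt_Gsum {t : ℝ} (ht : |t| < 1) :
    HasDerivAt (fun s => ∑' n, dcf n * s^n) (∑' n, dcf n * (n * t^(n-1))) t := by
  set r : ℝ := (|t| + 1) / 2 with hrdef
  have hr0 : 0 < r := by positivity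
  have htr : |t| < r := by rw [hrdef]; linarith
  have hr1 : r < 1 := by rw [hrdef]; linarith
  apply hasDerivAt_tsum_of_isPreconnected (summable_deriv_bound hr0 hr1)
    (isOpen_Ioo : IsOpen (Set.Ioo (-r) r)) (convex_Ioo _ _).isPreconnected
    (fun n y _ => (hasDerivAt_pow n y).const_mul (dcf n))
  · intro n y hy
    have hyr : |y| ≤ r := le_of_lt (abs_lt.mpr ⟨hy.1, hy.2⟩)
    rw [norm_mul, Real.norm_eq_abs, abs_of_pos (dcf_pos n), norm_mul, norm_pow,
      Real.norm_eq_abs, Real.norm_eq_abs, Nat.abs_cast]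
    have h1 : |y|^(n-1) ≤ r^(n-1) := pow_le_pow_left₀ (abs_nonneg y) hyr _
    calc dcf n * ((n:ℝ) * |y|^(n-1)) ≤ 1 * ((n:ℝ) * r^(n-1)) := by
          apply mul_le_mul (dcf_le_one n) _ (by positivity) zero_le_one
          exact mul_le_mul_of_nonneg_left h1 (Nat.cast_nonneg n)
      _ = (n:ℝ) * r^(n-1) := one_mul _
  · exact Set.mem_Ioo.mpr ⟨neg_lt_zero.mpr hr0, hr0⟩
  · exact summable_dcf_pow (t := 0) (by norm_num)
  · exact Set.mem_Ioo.mpr ⟨neg_lt_of_abs_lt htr, lt_of_abs_lt htr⟩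

lemma key {s : ℝ} (hs : |s| < 1) :
    2 * (1 - s) * (∑' n, dcf n * (n * s^(n-1))) = ∑' n, dcf n * s^n := by
  set f : ℕ → ℝ := fun n => dcf n * (n * s^(n-1)) with hf
  have hD : HasSum f (∑' n, f n) := (summable_dcf_deriv hs).hasSum
  have hf0 : f 0 = 0 := by simp [hf]
  have hD1 : HasSum (fun n => f (n+1)) (∑' n, f n) := by
    rw [hasSum_nat_add_iff 1]
    simpa [hf0] using hD
  have h2 : HasSum (fun n => 2 * f (n+1) - 2 * (s * f n))
      (2 * (∑' n, f n) - 2 * (s * (∑' n, f n))) := by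
    have ha := hD1.mul_left 2
    have hb := (hD.mul_left s).mul_left 2
    simpa [mul_assoc] using ha.sub hb
  have hterm : ∀ n : ℕ, 2 * f (n+1) - 2 * (s * f n) = dcf n * s^n := by
    intro n
    have hsucc : dcf (n+1) = dcf n * (2*n+1) / (2*n+2) := rfl
    cases n with
    | zero => norm_num [hf, dcf]
    | succ m =>
      have h1 : (m+1+1 : ℕ) - 1 = m+1 := rfl
      have h2 : (m+1 : ℕ) - 1 = m := rfl
      simp only [hf, hsucc, h1, h2]
      have hpow : s^(m+1) = s^m * s := pow_succ s m
      push_cast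
      field_simp
      ring
  have h3 : HasSum (fun n => dcf n * s^n)
      (2 * (∑' n, f n) - 2 * (s * (∑' n, f n))) := by
    simpa only [hterm] using h2
  rw [h3.tsum_eq]
  ring

lemma Gsum_zero : (∑' n, dcf n * (0:ℝ)^n) = 1 := by
  rw [tsum_eq_single 0]
  · norm_num [dcf]
  · intro n hn; simp [zero_pow hn]

lemma hasDerivAt_h {s : ℝ} (hs : |s| < 1) :
    HasDerivAt (fun u => (1-u) * (∑' n, dcf n * u^n)^2) 0 s := by
  have hG := hasDerivAt_Gsum hs
  have hGG := hG.pow 2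
  have hlin : HasDerivAt (fun u : ℝ => 1 - u) (-1) s := (hasDerivAt_id s).const_sub 1
  have H := hlin.mul hGG
  have hzero : (-1) * (∑' n, dcf n * s^n)^2 +
      (1 - s) * ((2:ℕ) * (∑' n, dcf n * s^n)^(2-1) * (∑' n, dcf n * (n * s^(n-1)))) = 0 := by
    have K := key hs
    push_cast
    linear_combination (∑' n, dcf n * s^n) * K
  rw [show ((fun s : ℝ => ∑' n, dcf n * s^n) ^ 2) s = (∑' n, dcf n * s^n)^2 from rfl, hzero] at H
  exact H

lemma G_sq {t : ℝ} (h0 : 0 ≤ t) (h1 : t < 1) :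
    (1 - t) * (∑' n, dcf n * t^n)^2 = 1 := by
  rcases eq_or_lt_of_le h0 with h|h
  · rw [← h]; simp [Gsum_zero]
  · have habs : ∀ x ∈ Set.Icc (0:ℝ) t, |x| < 1 := by
      intro x hx
      rw [abs_lt]
      constructor <;> [linarith [hx.1]; linarith [hx.2]]
    have hdiff : DifferentiableOn ℝ (fun u => (1-u) * (∑' n, dcf n * u^n)^2) (Set.Icc 0 t) :=
      fun x hx => (hasDerivAt_h (habs x hx)).differentiableAt.differentiableWithinAt
    have hconst := constant_of_derivWithin_zero (a := 0) (b := t) hdiff ?_ t (Set.mem_Icc.mpr ⟨h0, le_rfl⟩)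
    · rw [hconst]; simp [Gsum_zero]
    · intro x hx
      have hx' : x ∈ Set.Icc (0:ℝ) t := Set.mem_Icc.mpr ⟨hx.1, hx.2.le⟩
      exact ((hasDerivAt_h (habs x hx')).hasDerivWithinAt).derivWithin ((uniqueDiffOn_Icc h) x hx')

lemma Gsum_eq {t : ℝ} (h0 : 0 ≤ t) (h1 : t < 1) :
    (∑' n, dcf n * t^n) = 1 / Real.sqrt (1-t) := by
  have hpos : 1 ≤ ∑' n, dcf n * t^n := by
    have hG := (summable_dcf_pow (t := t) (by rw [abs_of_nonneg h0]; exact h1)).hasSum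
    have := le_hasSum hG 0 (fun j _ => mul_nonneg (dcf_pos j).le (pow_nonneg h0 j))
    simpa [dcf] using this
  have hsq := G_sq h0 h1
  have h1t : (0:ℝ) < 1 - t := by linarith
  have hGsq : (∑' n, dcf n * t^n)^2 = 1/(1-t) := by
    field_simp at hsq ⊢
    linarith
  calc (∑' n, dcf n * t^n) = Real.sqrt ((∑' n, dcf n * t^n)^2) :=
        (Real.sqrt_sq (by linarith)).symm
    _ = Real.sqrt (1/(1-t)) := by rw [hGsq]
    _ = 1 / Real.sqrt (1-t) := by
        rw [one_div, one_div, Real.sqrt_inv]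

lemma integral_sin_pow_even' (n : ℕ) :
    ∫ θ in (0:ℝ)..(π/2), sin θ ^ (2*n) = (π/2) * dcf n := by
  induction n with
  | zero => simp [dcf]
  | succ n ih =>
    have h : 2*(n+1) = 2*n + 2 := by ring
    rw [h, integral_sin_pow (2*n), ih]
    have : dcf (n+1) = dcf n * (2*(n:ℝ)+1) / (2*(n:ℝ)+2) := rfl
    rw [this]
    simp only [Real.sin_zero, Real.cos_pi_div_two]
    push_cast
    ring

theorem ellipticD_series (x : ℝ) (hx : x ∈ Set.Ioo (-1:ℝ) 1) (hx0 : x ≠ 0) :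
    HasSum (fun i : ℕ =>
        π * (((i : ℝ) + 1) / (2 * (i : ℝ) + 1))
          * ((Nat.doubleFactorial (2 * i + 1) : ℝ) / (Nat.doubleFactorial (2 * i + 2))) ^ 2
          * x ^ (2 * i))
      ((ellipticK x - ellipticE x) / x ^ 2) := by
  obtain ⟨hxl, hxr⟩ := hx
  have hx2 : x^2 < 1 := by nlinarith
  have hx2' : (0:ℝ) ≤ x^2 := sq_nonneg x
  have hwpos : ∀ θ : ℝ, 0 < 1 - x^2 * sin θ^2 := by
    intro θ
    nlinarith [sin_sq_le_one θ, sq_nonneg (sin θ)]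
  have hconts : Continuous fun θ : ℝ => Real.sqrt (1 - x^2 * sin θ^2) := by
    apply Real.continuous_sqrt.comp; continuity
  have hcont1 : Continuous fun θ : ℝ => 1 / Real.sqrt (1 - x^2 * sin θ^2) := by
    apply continuous_const.div hconts
    exact fun θ => (Real.sqrt_pos.mpr (hwpos θ)).ne'
  have hcont2 : Continuous fun θ : ℝ => sin θ^2 / Real.sqrt (1 - x^2 * sin θ^2) := by
    apply Continuous.div (by continuity) hconts
    exact fun θ => (Real.sqrt_pos.mpr (hwpos θ)).ne'
  -- K - E
  have KE : ellipticK x - ellipticE x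
      = ∫ θ in (0:ℝ)..(π/2), x^2 * (sin θ^2 / Real.sqrt (1 - x^2 * sin θ^2)) := by
    rw [ellipticK, ellipticE,
      ← intervalIntegral.integral_sub (hcont1.intervalIntegrable _ _) (hconts.intervalIntegrable _ _)]
    apply intervalIntegral.integral_congr
    intro θ _
    have h1 := hwpos θ
    have h2 : (0:ℝ) < Real.sqrt (1 - x^2 * sin θ^2) := Real.sqrt_pos.mpr h1
    have h3 : Real.sqrt (1 - x^2 * sin θ^2) * Real.sqrt (1 - x^2 * sin θ^2)
        = 1 - x^2 * sin θ^2 := Real.mul_self_sqrt h1.le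
    field_simp
    rw [Real.sq_sqrt h1.le]; ring
  have Dval : (ellipticK x - ellipticE x) / x^2
      = ∫ θ in (0:ℝ)..(π/2), sin θ^2 / Real.sqrt (1 - x^2 * sin θ^2) := by
    rw [KE, intervalIntegral.integral_const_mul]
    field_simp
  -- pointwise series
  set F : ℕ → ℝ → ℝ := fun n θ => dcf n * x^(2*n) * sin θ^(2*n+2) with hF
  have hpt : ∀ θ : ℝ, HasSum (fun n => F n θ)
      (sin θ^2 / Real.sqrt (1 - x^2 * sin θ^2)) := by
    intro θ
    have hs0 : (0:ℝ) ≤ x^2 * sin θ^2 := by positivity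
    have hs1 : x^2 * sin θ^2 < 1 := by nlinarith [sin_sq_le_one θ, sq_nonneg (sin θ)]
    have h := (summable_dcf_pow (t := x^2 * sin θ^2) (by rw [abs_of_nonneg hs0]; exact hs1)).hasSum
    rw [Gsum_eq hs0 hs1] at h
    have h2 := h.mul_left (sin θ^2)
    have h3 : ∀ n : ℕ, sin θ^2 * (dcf n * (x^2 * sin θ^2)^n) = F n θ := by
      intro n
      rw [hF]
      simp only
      rw [mul_pow, ← pow_mul, ← pow_mul]
      ring
    have h4 : sin θ^2 * (1 / Real.sqrt (1 - x^2 * sin θ^2))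
        = sin θ^2 / Real.sqrt (1 - x^2 * sin θ^2) := by ring
    rw [h4] at h2
    simp only [h3] at h2
    exact h2
  have hle : (0:ℝ) ≤ π/2 := by positivity
  -- swap sum and integral
  set μ := MeasureTheory.volume.restrict (Set.Ioc (0:ℝ) (π/2)) with hμ
  have hInt : ∀ n, MeasureTheory.Integrable (F n) μ := by
    intro n
    apply Continuous.integrableOn_Ioc
    rw [hF]; simp only; continuity
  have hNorm : Summable (fun n => ∫ θ, ‖F n θ‖ ∂μ) := by
    apply Summable.of_nonneg_of_le
      (fun n => MeasureTheory.integral_nonneg (fun θ => norm_nonneg _))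
      (fun n => ?_)
      ((summable_geometric_of_lt_one hx2' hx2).mul_left (π/2))
    have hb : ∀ θ : ℝ, ‖F n θ‖ ≤ (x^2)^n := by
      intro θ
      rw [hF]; simp only [norm_mul, norm_pow, Real.norm_eq_abs]
      rw [abs_of_pos (dcf_pos n)]
      have e1 : (x^2)^n = |x|^(2*n) := by rw [← sq_abs, ← pow_mul]
      rw [e1]
      have h1 : |sin θ|^(2*n+2) ≤ 1 :=
        pow_le_one₀ (abs_nonneg _) (abs_sin_le_one θ)
      have h2 : (0:ℝ) ≤ |x|^(2*n) := by positivity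
      calc dcf n * |x|^(2*n) * |sin θ|^(2*n+2)
          ≤ 1 * |x|^(2*n) * 1 := by
            apply mul_le_mul (mul_le_mul (dcf_le_one n) le_rfl h2 zero_le_one) h1
              (pow_nonneg (abs_nonneg _) _) (by positivity)
        _ = |x|^(2*n) := by ring
    have hconstInt : MeasureTheory.Integrable (fun _ : ℝ => (x^2)^n) μ := by
      rw [hμ]
      refine MeasureTheory.integrableOn_const ?_
      rw [Real.volume_Ioc]
      exact ENNReal.ofReal_ne_top
    calc ∫ θ, ‖F n θ‖ ∂μ ≤ ∫ _θ, (x^2)^n ∂μ :=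
          MeasureTheory.integral_mono (hInt n).norm hconstInt hb
      _ = (π/2) * (x^2)^n := by
          rw [MeasureTheory.integral_const, hμ, MeasureTheory.measureReal_restrict_apply_univ,
            Real.volume_real_Ioc_of_le hle, smul_eq_mul]
          norm_num
  have hswap := MeasureTheory.hasSum_integral_of_summable_integral_norm hInt hNorm
  -- evaluate pieces
  have hle : (0:ℝ) ≤ π/2 := by positivity
  have hval : (∫ θ, (∑' n, F n θ) ∂μ) = (ellipticK x - ellipticE x) / x^2 := by
    rw [Dval, intervalIntegral.integral_of_le hle]
    apply MeasureTheory.integral_congr_ae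
    filter_upwards with θ
    exact (hpt θ).tsum_eq
  have hterm : ∀ i : ℕ, (π * (((i : ℝ) + 1) / (2 * (i : ℝ) + 1))
          * ((Nat.doubleFactorial (2 * i + 1) : ℝ) / (Nat.doubleFactorial (2 * i + 2))) ^ 2
          * x ^ (2 * i)) = ∫ θ, F i θ ∂μ := by
    intro i
    have h1 : (∫ θ, F i θ ∂μ) = dcf i * x^(2*i) * ((π/2) * dcf (i+1)) := by
      rw [hμ, ← intervalIntegral.integral_of_le hle]
      have : ∀ θ, F i θ = dcf i * x^(2*i) * sin θ^(2*(i+1)) := by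
        intro θ; rw [hF]; simp only; ring_nf
      simp only [this]
      rw [intervalIntegral.integral_const_mul, integral_sin_pow_even' (i+1)]
    rw [h1, ← dcf_succ_eq]
    have h2 : dcf (i+1) = dcf i * (2*(i:ℝ)+1) / (2*(i:ℝ)+2) := rfl
    rw [h2]
    have c1 : (2*(i:ℝ)+1) ≠ 0 := by positivity
    have c2 : (2*(i:ℝ)+2) ≠ 0 := by positivity
    field_simp
  rw [show (fun i : ℕ => π * (((i : ℝ) + 1) / (2 * (i : ℝ) + 1))
          * ((Nat.doubleFactorial (2 * i + 1) : ℝ) / (Nat.doubleFactorial (2 * i + 2))) ^ 2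
          * x ^ (2 * i)) = (fun i => ∫ θ, F i θ ∂μ) from funext hterm, ← hval]
  exact hswap
end

section
/- The series ∑_{i=1}^{∞} (1/((2i-1)(i+1)))·((2i-1)!!/(2i)!!)² converges (e.g., by Raabe's test the terms are O(i^{-5/2})) and its sum equals 1 - 8/(3π). -/
open Real Filter Finset Topology

noncomputable def myc (n : ℕ) : ℝ :=
  (Nat.doubleFactorial (2 * n - 1) : ℝ) / (Nat.doubleFactorial (2 * n))

lemma myc_pos (n : ℕ) : 0 < myc n :=
  div_pos (by exact_mod_cast Nat.doubleFactorial_pos _)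
    (by exact_mod_cast Nat.doubleFactorial_pos _)

lemma myc_zero : myc 0 = 1 := by simp [myc, Nat.doubleFactorial]

lemma myc_succ (n : ℕ) : myc (n + 1) = myc n * (2 * n + 1) / (2 * n + 2) := by
  match n with
  | 0 => norm_num [myc, Nat.doubleFactorial]
  | Nat.succ m =>
    have h1 : 2 * (m + 1 + 1) - 1 = (2 * (m + 1) - 1) + 2 := by omega
    have h2 : 2 * (m + 1 + 1) = (2 * (m + 1)) + 2 := by ring
    have h3 : ((2 * (m + 1) - 1 : ℕ) : ℝ) + 2 = 2 * (m + 1 : ℕ) + 1 := by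
      have : (2 * (m + 1) - 1 : ℕ) = 2 * m + 1 := by omega
      rw [this]; push_cast; ring
    rw [myc, h1, h2, Nat.doubleFactorial_add_two, Nat.doubleFactorial_add_two]
    push_cast
    rw [h3, myc]
    have hd1 : (Nat.doubleFactorial (2 * (m + 1)) : ℝ) ≠ 0 := by
      exact_mod_cast (Nat.doubleFactorial_pos _).ne'
    push_cast
    field_simp

lemma myc_wallis (n : ℕ) : (2 * n + 1) * (myc n) ^ 2 * Real.Wallis.W n = 1 := by
  induction n with
  | zero => simp [myc_zero, Real.Wallis.W]
  | succ k ih =>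
    rw [Real.Wallis.W_succ, myc_succ]
    have hW := Real.Wallis.W_pos k
    have hc := myc_pos k
    have h1 : (2 * (k : ℝ) + 1) ≠ 0 := by positivity
    have h2 : (2 * (k : ℝ) + 2) ≠ 0 := by positivity
    have h3 : (2 * (k : ℝ) + 3) ≠ 0 := by positivity
    push_cast
    push_cast at ih
    field_simp
    linear_combination ((2*(k:ℝ)+3)*(2*(k:ℝ)+2)^2*(2*(k:ℝ)+1) - (16*(k:ℝ)^4+64*(k:ℝ)^3+92*(k:ℝ)^2+54*(k:ℝ)+9)) * ih

theorem series_one_sub_eight_div_three_pi :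
    HasSum (fun i : ℕ =>
        1 / ((2 * (i : ℝ) + 1) * ((i : ℝ) + 2))
          * ((Nat.doubleFactorial (2 * i + 1) : ℝ) / (Nat.doubleFactorial (2 * i + 2))) ^ 2)
      (1 - 8 / (3 * π)) := by
  set f : ℕ → ℝ := fun i =>
    1 / ((2 * (i : ℝ) + 1) * ((i : ℝ) + 2))
      * ((Nat.doubleFactorial (2 * i + 1) : ℝ) / (Nat.doubleFactorial (2 * i + 2))) ^ 2 with hf
  have hfc : ∀ i : ℕ, f i = 1 / ((2 * (i : ℝ) + 1) * ((i : ℝ) + 2)) * (myc (i + 1)) ^ 2 := by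
    intro i
    have h1 : 2 * (i + 1) - 1 = 2 * i + 1 := by omega
    have h2 : 2 * (i + 1) = 2 * i + 2 := by ring
    simp [hf, myc, h1, h2]
  have hnonneg : ∀ i, 0 ≤ f i := by
    intro i
    rw [hfc]
    have : (0:ℝ) ≤ (i:ℝ) := Nat.cast_nonneg i
    positivity
  rw [hasSum_iff_tendsto_nat_of_nonneg hnonneg]
  have hpartial : ∀ N : ℕ, ∑ i ∈ range N, f i =
      1 - (2 * N + 1) * (4 * N + 3) / (3 * (N + 1)) * (myc N) ^ 2 := by
    intro N
    induction N with
    | zero => simp [myc_zero]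
    | succ k ih =>
      rw [sum_range_succ, ih, hfc, myc_succ]
      have hc := myc_pos k
      have h1 : (2 * (k : ℝ) + 1) ≠ 0 := by positivity
      have h2 : (2 * (k : ℝ) + 2) ≠ 0 := by positivity
      have h4 : ((k : ℝ) + 1) ≠ 0 := by positivity
      have h5 : ((k : ℝ) + 2) ≠ 0 := by positivity
      push_cast
      field_simp
      ring
  simp_rw [hpartial]
  have hW : ∀ N : ℕ, (2 * (N:ℝ) + 1) * (myc N) ^ 2 = (Real.Wallis.W N)⁻¹ := by
    intro N
    have h := myc_wallis N
    have hWp := (Real.Wallis.W_pos N).ne'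
    field_simp
    linarith [h]
  have hWlim : Tendsto (fun N : ℕ => (Real.Wallis.W N)⁻¹) atTop (𝓝 (2 / π)) := by
    have := (Real.Wallis.tendsto_W_nhds_pi_div_two).inv₀ (by positivity : (π/2 : ℝ) ≠ 0)
    convert this using 2
    rw [inv_div]
  have hratio : Tendsto (fun N : ℕ => (4 * (N:ℝ) + 3) / (3 * (N + 1))) atTop (𝓝 (4 / 3)) := by
    have h0 : Tendsto (fun N : ℕ => (3:ℝ) / N) atTop (𝓝 0) :=
      tendsto_const_div_atTop_nhds_zero_nat 3
    have hmain : Tendsto (fun N : ℕ => ((4:ℝ) + 3 / N) / (3 + 3 / N)) atTop (𝓝 (4 / 3)) := by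
      have := (tendsto_const_nhds (x := (4:ℝ)).add h0).div
        ((tendsto_const_nhds (x := (3:ℝ)).add h0)) (by norm_num)
      simpa only [add_zero, Pi.div_def] using this
    refine hmain.congr' ?_
    filter_upwards [eventually_ge_atTop 1] with N hN
    have hN0 : (0:ℝ) < N := by exact_mod_cast hN
    rw [div_eq_div_iff (by positivity) (by positivity)]
    field_simp
  have hmul : Tendsto (fun N : ℕ =>
      (2 * (N:ℝ) + 1) * (4 * N + 3) / (3 * (N + 1)) * (myc N) ^ 2) atTop (𝓝 (8 / (3 * π))) := by
    have heq : ∀ N : ℕ, (2 * (N:ℝ) + 1) * (4 * N + 3) / (3 * (N + 1)) * (myc N) ^ 2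
        = ((4 * (N:ℝ) + 3) / (3 * (N + 1))) * ((2 * (N:ℝ) + 1) * (myc N) ^ 2) := by
      intro N; ring
    simp_rw [heq, hW]
    have := hratio.mul hWlim
    convert this using 2
    rw [div_mul_div_comm]
    ring_nf
  have := hmul.const_sub 1
  simpa using this
end

section
/- For k ∈ (0,1), (4/3)·(K(k) + E(k) - D(k)) = π - π·∑_{i=1}^{∞} (1/((2i-1)(i+1)))·((2i-1)!!/(2i)!!)²·k^{2i}, where D(k) = (K(k)-E(k))/k². -/
open Real

open Real

noncomputable def aa : ℕ → ℝ := fun n => ∏ i ∈ Finset.range n, (2*(i:ℝ)+1)/(2*(i:ℝ)+2)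

lemma aa_zero : aa 0 = 1 := by simp [aa]

lemma aa_succ (n : ℕ) : aa (n+1) = aa n * ((2*(n:ℝ)+1)/(2*(n:ℝ)+2)) :=
  Finset.prod_range_succ _ n

lemma aa_pos (n : ℕ) : 0 < aa n :=
  Finset.prod_pos (fun i _ => by positivity)

lemma aa_le_one (n : ℕ) : aa n ≤ 1 := by
  apply Finset.prod_le_one (fun i _ => by positivity)
  intro i _
  rw [div_le_one (by positivity)]
  linarith

noncomputable def bb : ℕ → ℝ
  | 0 => 1
  | (n+1) => -(aa (n+1))/(2*(n:ℝ)+1)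

lemma abs_bb_le_one (n : ℕ) : |bb n| ≤ 1 := by
  cases n with
  | zero => simp [bb]
  | succ m =>
    show |-(aa (m+1))/(2*(m:ℝ)+1)| ≤ 1
    rw [abs_div, abs_neg, abs_of_pos (aa_pos _), abs_of_pos (by positivity)]
    rw [div_le_one (by positivity)]
    have := aa_le_one (m+1)
    have hm : (0:ℝ) ≤ (m:ℝ) := Nat.cast_nonneg m
    linarith [aa_le_one (m+1)]

lemma summable_aa_mul {x : ℝ} (hx : |x| < 1) : Summable (fun n => aa n * x ^ n) := by
  apply Summable.of_norm_bounded (summable_geometric_of_lt_one (abs_nonneg x) hx)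
  intro n
  rw [norm_mul, norm_pow, Real.norm_eq_abs, Real.norm_eq_abs, abs_of_pos (aa_pos n)]
  calc aa n * |x|^n ≤ 1 * |x|^n := by gcongr; exact aa_le_one n
    _ = |x|^n := one_mul _

lemma hasSum_invSqrt {x : ℝ} (hx0 : 0 ≤ x) (hx1 : x < 1) :
    HasSum (fun n => aa n * x ^ n) (1 / Real.sqrt (1 - x)) := by
  set r : ℝ := (x + 1) / 2 with hrdef
  have hxr : x < r := by rw [hrdef]; linarith
  have hr0 : 0 < r := by rw [hrdef]; linarith
  have hr1 : r < 1 := by rw [hrdef]; linarith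
  set u : ℕ → ℝ := fun n => (n : ℝ) * r ^ (n - 1) with hudef
  have hu : Summable u := by
    refine Summable.of_nonneg_of_le (f := fun n : ℕ => (1/r) * ((n:ℝ)^1 * r ^ n))
      (fun n => by positivity) ?_
      (((summable_pow_mul_geometric_of_norm_lt_one (R := ℝ) 1
        (by rwa [Real.norm_eq_abs, abs_of_pos hr0])).mul_left _))
    intro n
    cases n with
    | zero => simp [hudef]
    | succ m =>
      simp only [hudef, Nat.add_sub_cancel]
      have h : (1/r) * (((m+1:ℕ):ℝ)^1 * r ^ (m+1)) = ((m+1:ℕ):ℝ) * r ^ m := by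
        rw [pow_one, pow_succ]
        field_simp
      rw [h]
  have hder : ∀ (n : ℕ) (y : ℝ), HasDerivAt (fun z : ℝ => aa n * z ^ n)
      (aa n * ((n:ℝ) * y ^ (n-1))) y :=
    fun n y => (hasDerivAt_pow n y).const_mul (aa n)
  have hbound : ∀ (n : ℕ) (y : ℝ), y ∈ Set.Ioo (-r) r →
      ‖aa n * ((n:ℝ) * y ^ (n-1))‖ ≤ u n := by
    intro n y hy
    have hyr : |y| ≤ r := le_of_lt (abs_lt.2 ⟨hy.1, hy.2⟩)
    rw [norm_mul, norm_mul, Real.norm_natCast, norm_pow, Real.norm_eq_abs,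
      Real.norm_eq_abs, abs_of_pos (aa_pos n), hudef]
    have h1 : |y| ^ (n-1) ≤ r ^ (n-1) := pow_le_pow_left₀ (abs_nonneg y) hyr _
    calc aa n * ((n:ℝ) * |y| ^ (n-1)) ≤ 1 * ((n:ℝ) * |y| ^ (n-1)) :=
          mul_le_mul_of_nonneg_right (aa_le_one n) (by positivity)
      _ = (n:ℝ) * |y| ^ (n-1) := one_mul _
      _ ≤ (n:ℝ) * r ^ (n-1) := mul_le_mul_of_nonneg_left h1 (Nat.cast_nonneg n)
  have h0sum : Summable (fun n => aa n * (0:ℝ) ^ n) := by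
    apply summable_of_ne_finset_zero (s := {0})
    intro n hn
    simp only [Finset.mem_singleton] at hn
    simp [zero_pow hn]
  set f : ℝ → ℝ := fun y => ∑' n, aa n * y ^ n with hfdef
  have h0mem : (0:ℝ) ∈ Set.Ioo (-r) r := ⟨by linarith, hr0⟩
  have hfder : ∀ y ∈ Set.Ioo (-r) r,
      HasDerivAt f (∑' n, aa n * ((n:ℝ) * y ^ (n-1))) y := by
    intro y hy
    exact hasDerivAt_tsum_of_isPreconnected hu isOpen_Ioo
      (convex_Ioo _ _).isPreconnected (fun n z _ => hder n z) hbound h0mem h0sum hy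
  -- key identity
  have key : ∀ y ∈ Set.Ioo (-r) r,
      f y = 2 * (1 - y) * (∑' n, aa n * ((n:ℝ) * y ^ (n-1))) := by
    intro y hy
    have hyabs : |y| < 1 := lt_trans (abs_lt.2 ⟨hy.1, hy.2⟩) hr1
    have hs'y : Summable (fun n => aa n * ((n:ℝ) * y ^ (n-1))) :=
      Summable.of_norm_bounded hu (fun n => hbound n y hy)
    set S' := ∑' n, aa n * ((n:ℝ) * y ^ (n-1)) with hS'def
    have hS' : HasSum (fun n => aa n * ((n:ℝ) * y ^ (n-1))) S' := hs'y.hasSum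
    have h1 : HasSum (fun m => aa (m+1) * (((m:ℝ)+1) * y ^ m)) S' := by
      have := (hasSum_nat_add_iff' (f := fun n => aa n * ((n:ℝ) * y ^ (n-1))) 1).2 hS'
      simp only [Finset.range_one, Finset.sum_singleton, Nat.cast_zero, zero_mul,
        mul_zero, sub_zero, Nat.add_sub_cancel] at this
      refine this.congr_fun (fun m => ?_)
      push_cast
      ring
    have h2 : HasSum (fun m => aa m * (m:ℝ) * y ^ m) (y * S') := by
      have h2' : HasSum (fun m => aa (m+1) * ((m:ℝ)+1) * y ^ (m+1)) (y * S') := by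
        refine (h1.mul_left y).congr_fun (fun m => ?_)
        ring
      have := (hasSum_nat_add_iff (f := fun m => aa m * (m:ℝ) * y ^ m) 1).1 (by
        refine h2'.congr_fun (fun m => ?_)
        push_cast
        ring)
      simpa using this
    have h3 : HasSum (fun m => 2 * (aa (m+1) * (((m:ℝ)+1) * y ^ m))
        - 2 * (aa m * (m:ℝ) * y ^ m)) (2 * S' - 2 * (y * S')) :=
      (h1.mul_left 2).sub (h2.mul_left 2)
    have hterm : ∀ m : ℕ, 2 * (aa (m+1) * (((m:ℝ)+1) * y ^ m))
        - 2 * (aa m * (m:ℝ) * y ^ m) = aa m * y ^ m := by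
      intro m
      rw [aa_succ]
      have h2m : (2*(m:ℝ)+2) ≠ 0 := by positivity
      field_simp
      ring
    rw [funext hterm] at h3
    have h4 : HasSum (fun n => aa n * y ^ n) (f y) := (summable_aa_mul hyabs).hasSum
    have := h4.unique h3
    rw [this]; ring
  -- F is constant on [0, x]
  have hsub : Set.Icc (0:ℝ) x ⊆ Set.Ioo (-r) r := fun y hy =>
    ⟨lt_of_lt_of_le (by linarith) hy.1, lt_of_le_of_lt hy.2 hxr⟩
  set F : ℝ → ℝ := fun y => f y * Real.sqrt (1 - y) with hFdef
  have hFder : ∀ y ∈ Set.Icc (0:ℝ) x, HasDerivAt F 0 y := by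
    intro y hy
    have hymem := hsub hy
    have hy1 : 0 < 1 - y := by
      have : y < r := hymem.2
      linarith
    have hsq : 0 < Real.sqrt (1 - y) := Real.sqrt_pos.2 hy1
    have hsqrtder : HasDerivAt (fun z : ℝ => Real.sqrt (1 - z))
        (-(1 / (2 * Real.sqrt (1 - y)))) y := by
      have h1 : HasDerivAt (fun z : ℝ => 1 - z) (-1) y := by
        simpa using (hasDerivAt_id y).const_sub 1
      have := (Real.hasDerivAt_sqrt (ne_of_gt hy1)).comp y h1
      refine this.congr_deriv ?_
      ring
    set S' := ∑' n, aa n * ((n:ℝ) * y ^ (n-1)) with hS'def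
    have hd := (hfder y hymem).mul hsqrtder
    refine hd.congr_deriv ?_
    rw [key y hymem, ← hS'def]
    have hsne : Real.sqrt (1-y) ≠ 0 := ne_of_gt hsq
    have hrw : (2*(1-y)*S') * (-(1/(2*Real.sqrt (1-y)))) = -(S' * ((1-y)/Real.sqrt (1-y))) := by
      field_simp
    rw [hrw, Real.div_sqrt]
    ring
  have hF0 : F 0 = 1 := by
    rw [hFdef]
    simp only [sub_zero, Real.sqrt_one, mul_one]
    rw [hfdef]
    simp only
    rw [tsum_eq_single 0 (fun n hn => by simp [zero_pow hn])]
    simp [aa_zero]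
  have hconst := constant_of_has_deriv_right_zero
    (f := F) (a := 0) (b := x)
    (fun y hy => ((hFder y hy).continuousAt).continuousWithinAt)
    (fun y hy => ((hFder y (Set.mem_Icc_of_Ico hy)).hasDerivWithinAt))
  have hFx : F x = 1 := by
    rw [hconst x (Set.mem_Icc.2 ⟨hx0, le_refl x⟩), hF0]
  have hx1' : 0 < 1 - x := by linarith
  have hsqx : 0 < Real.sqrt (1 - x) := Real.sqrt_pos.2 hx1'
  have hfx : f x = 1 / Real.sqrt (1 - x) := by
    rw [hFdef] at hFx
    simp only at hFx
    field_simp at hFx ⊢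
    linarith
  have := (summable_aa_mul (by rw [abs_of_nonneg hx0]; exact hx1)).hasSum
  rwa [show ∑' n, aa n * x ^ n = f x from rfl, hfx] at this

lemma hasSum_sqrt {x : ℝ} (hx0 : 0 ≤ x) (hx1 : x < 1) :
    HasSum (fun n => bb n * x ^ n) (Real.sqrt (1-x)) := by
  have h := hasSum_invSqrt hx0 hx1
  set S := 1 / Real.sqrt (1-x) with hSdef
  set G : ℕ → ℝ := fun n => match n with
    | 0 => 0
    | (m+1) => aa m * x^(m+1) with hGdef
  have h1 : HasSum (fun n => G (n+1)) (x * S) := by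
    have := h.mul_left x
    refine this.congr_fun (fun m => ?_)
    show aa m * x^(m+1) = x * (aa m * x ^ m)
    ring
  have h2 : HasSum G (x * S) := by
    have := (hasSum_nat_add_iff (f := G) 1).1 h1
    simpa [show G 0 = 0 from rfl] using this
  have h3 := h.sub h2
  have hterm : ∀ n : ℕ, aa n * x ^ n - G n = bb n * x ^ n := by
    intro n
    cases n with
    | zero => simp [bb, aa_zero, show G 0 = 0 from rfl]
    | succ m =>
      show aa (m+1) * x^(m+1) - aa m * x^(m+1) = -(aa (m+1))/(2*(m:ℝ)+1) * x^(m+1)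
      have hne : (2*(m:ℝ)+2) ≠ 0 := by positivity
      have hne2 : (2*(m:ℝ)+1) ≠ 0 := by positivity
      have ham : aa m = aa (m+1) * (2*(m:ℝ)+2) / (2*(m:ℝ)+1) := by
        rw [aa_succ]
        field_simp
      rw [ham]
      field_simp
      ring
  rw [funext hterm] at h3
  have hx1' : 0 < 1 - x := by linarith
  have hsq : 0 < Real.sqrt (1-x) := Real.sqrt_pos.2 hx1'
  have hsum_eq : S - x * S = Real.sqrt (1-x) := by
    have h' : S - x * S = (1-x)/Real.sqrt (1-x) := by
      rw [hSdef]; field_simp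
    rw [h', Real.div_sqrt]
  rwa [hsum_eq] at h3

lemma integral_sin_pow_even_halfpi (n : ℕ) :
    (∫ θ in (0:ℝ)..(π/2), sin θ ^ (2*n)) = π/2 * aa n := by
  have hrefl : (∫ x in (0:ℝ)..(π/2), sin x ^ (2*n))
      = ∫ x in (π/2)..π, sin x ^ (2*n) := by
    have := intervalIntegral.integral_comp_sub_left (a := (0:ℝ)) (b := π/2)
      (fun x => sin x ^ (2*n)) π
    simp only [Real.sin_pi_sub] at this
    rw [this, show π - (π/2) = π/2 from by ring, show π - 0 = π from by ring]
  have hint : ∀ a b : ℝ, IntervalIntegrable (fun x => sin x ^ (2*n)) MeasureTheory.volume a b :=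
    fun a b => (Continuous.pow (by continuity) _).intervalIntegrable a b
  have hsplit := intervalIntegral.integral_add_adjacent_intervals
    (a := (0:ℝ)) (b := π/2) (c := π) (hint 0 (π/2)) (hint (π/2) π)
  have heven := integral_sin_pow_even (n := n)
  have : (∫ x in (0:ℝ)..(π/2), sin x ^ (2*n)) * 2 = π * aa n := by
    rw [show (∫ x in (0:ℝ)..(π/2), sin x ^ (2*n)) * 2
      = (∫ x in (0:ℝ)..(π/2), sin x ^ (2*n)) + (∫ x in (π/2)..π, sin x ^ (2*n)) by
        rw [← hrefl]; ring]
    rw [hsplit, heven]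
    rfl
  linarith

lemma df_ratio (n : ℕ) :
    ((Nat.doubleFactorial (2*n+1) : ℝ)) / ((Nat.doubleFactorial (2*n+2) : ℝ)) = aa (n+1) := by
  induction n with
  | zero => simp [Nat.doubleFactorial, aa_succ, aa_zero]
  | succ m ih =>
    have h1 : 2*(m+1)+1 = (2*m+1)+2 := by ring
    have h2 : 2*(m+1)+2 = (2*m+2)+2 := by ring
    rw [h1, h2, Nat.doubleFactorial, Nat.doubleFactorial]
    have hd1 : (0:ℝ) < (Nat.doubleFactorial (2*m+1) : ℝ) := by
      exact_mod_cast Nat.doubleFactorial_pos _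
    have hd2 : (0:ℝ) < (Nat.doubleFactorial (2*m+2) : ℝ) := by
      exact_mod_cast Nat.doubleFactorial_pos _
    rw [aa_succ (m+1)]
    rw [← ih]
    push_cast
    have hne2 : ((2*m+2:ℕ):ℝ)+2 ≠ 0 := by positivity
    field_simp
    ring

lemma hasSum_K {k : ℝ} (hk0 : 0 < k) (hk1 : k < 1) :
    HasSum (fun n => π/2 * (aa n * aa n) * (k^2)^n) (ellipticK k) := by
  have hc1 : k^2 < 1 := by nlinarith
  have hc0 : 0 < k^2 := by positivity
  have hmain : HasSum (fun n => ∫ θ in (0:ℝ)..(π/2), aa n * (k^2 * sin θ^2)^n)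
      (∫ θ in (0:ℝ)..(π/2), 1 / Real.sqrt (1 - k^2 * sin θ^2)) := by
    apply intervalIntegral.hasSum_integral_of_dominated_convergence
      (bound := fun n (_ : ℝ) => (k^2)^n)
    · intro n
      apply Continuous.aestronglyMeasurable
      continuity
    · intro n
      filter_upwards with θ _
      have hs : sin θ^2 ≤ 1 := sin_sq_le_one θ
      have h0 : (0:ℝ) ≤ k^2*sin θ^2 := by positivity
      rw [norm_mul, norm_pow, Real.norm_eq_abs, Real.norm_eq_abs, abs_of_pos (aa_pos n),
        abs_of_nonneg h0]
      calc aa n * (k^2*sin θ^2)^n ≤ 1 * (k^2)^n :=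
            mul_le_mul (aa_le_one n) (pow_le_pow_left₀ h0 (by nlinarith) n)
              (by positivity) one_pos.le
        _ = (k^2)^n := one_mul _
    · filter_upwards with θ _
      exact summable_geometric_of_lt_one hc0.le hc1
    · exact intervalIntegrable_const
    · filter_upwards with θ _
      have h1 : k^2*sin θ^2 < 1 :=
        lt_of_le_of_lt (by nlinarith [sin_sq_le_one θ]) hc1
      exact hasSum_invSqrt (by positivity) h1
  have hterm : (fun n => ∫ θ in (0:ℝ)..(π/2), aa n * (k^2 * sin θ^2)^n)
      = fun n => π/2 * (aa n * aa n) * (k^2)^n := by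
    funext n
    have h : ∀ θ:ℝ, aa n * (k^2*sin θ^2)^n = (aa n * (k^2)^n) * sin θ^(2*n) := by
      intro θ; rw [mul_pow, pow_mul]; ring
    simp_rw [h]
    rw [intervalIntegral.integral_const_mul, integral_sin_pow_even_halfpi]
    ring
  rw [hterm] at hmain
  simpa [ellipticK] using hmain

lemma hasSum_E {k : ℝ} (hk0 : 0 < k) (hk1 : k < 1) :
    HasSum (fun n => π/2 * (bb n * aa n) * (k^2)^n) (ellipticE k) := by
  have hc1 : k^2 < 1 := by nlinarith
  have hc0 : 0 < k^2 := by positivity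
  have hmain : HasSum (fun n => ∫ θ in (0:ℝ)..(π/2), bb n * (k^2 * sin θ^2)^n)
      (∫ θ in (0:ℝ)..(π/2), Real.sqrt (1 - k^2 * sin θ^2)) := by
    apply intervalIntegral.hasSum_integral_of_dominated_convergence
      (bound := fun n (_ : ℝ) => (k^2)^n)
    · intro n
      apply Continuous.aestronglyMeasurable
      continuity
    · intro n
      filter_upwards with θ _
      have hs : sin θ^2 ≤ 1 := sin_sq_le_one θ
      have h0 : (0:ℝ) ≤ k^2*sin θ^2 := by positivity
      rw [norm_mul, norm_pow, Real.norm_eq_abs, Real.norm_eq_abs, abs_of_nonneg h0]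
      calc |bb n| * (k^2*sin θ^2)^n ≤ 1 * (k^2)^n :=
            mul_le_mul (abs_bb_le_one n) (pow_le_pow_left₀ h0 (by nlinarith) n)
              (by positivity) one_pos.le
        _ = (k^2)^n := one_mul _
    · filter_upwards with θ _
      exact summable_geometric_of_lt_one hc0.le hc1
    · exact intervalIntegrable_const
    · filter_upwards with θ _
      have h1 : k^2*sin θ^2 < 1 :=
        lt_of_le_of_lt (by nlinarith [sin_sq_le_one θ]) hc1
      exact hasSum_sqrt (by positivity) h1
  have hterm : (fun n => ∫ θ in (0:ℝ)..(π/2), bb n * (k^2 * sin θ^2)^n)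
      = fun n => π/2 * (bb n * aa n) * (k^2)^n := by
    funext n
    have h : ∀ θ:ℝ, bb n * (k^2*sin θ^2)^n = (bb n * (k^2)^n) * sin θ^(2*n) := by
      intro θ; rw [mul_pow, pow_mul]; ring
    simp_rw [h]
    rw [intervalIntegral.integral_const_mul, integral_sin_pow_even_halfpi]
    ring
  rw [hterm] at hmain
  simpa [ellipticE] using hmain

theorem area_series (k : ℝ) (hk0 : 0 < k) (hk1 : k < 1) :
    HasSum (fun i : ℕ =>
        π * (1 / ((2 * (i : ℝ) + 1) * ((i : ℝ) + 2))
          * ((Nat.doubleFactorial (2 * i + 1) : ℝ) / (Nat.doubleFactorial (2 * i + 2))) ^ 2)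
          * k ^ (2 * (i + 1)))
      (π - 4 / 3 * (ellipticK k + ellipticE k - (ellipticK k - ellipticE k) / k ^ 2)) := by
  set c := k^2 with hcdef
  have hc0 : 0 < c := by positivity
  have hcne : c ≠ 0 := ne_of_gt hc0
  set K := ellipticK k
  set E := ellipticE k
  have hK := hasSum_K hk0 hk1
  have hE := hasSum_E hk0 hk1
  have hKE := hK.add hE
  have hKmE := hK.sub hE
  set t : ℕ → ℝ := fun n => π/2 * (aa n * aa n) * c^n - π/2 * (bb n * aa n) * c^n with htdef
  have ht0 : t 0 = 0 := by simp [htdef, aa_zero, bb]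
  have hshift1 : HasSum (fun n => t (n+1)) (K - E) := by
    have := (hasSum_nat_add_iff' (f := t) 1).2 hKmE
    simpa [ht0] using this
  have hDiv := hshift1.div_const c
  set g : ℕ → ℝ := fun n => (4:ℝ)/3 * ((π/2 * (aa n * aa n) * c^n + π/2 * (bb n * aa n) * c^n)
      - t (n+1) / c) with hgdef
  have hcomb : HasSum g ((4:ℝ)/3 * (K + E - (K - E)/c)) := (hKE.sub hDiv).mul_left _
  have hg0 : g 0 = π := by
    have haa1 : aa 1 = 1/2 := by rw [aa_succ, aa_zero]; norm_num
    have hbb1 : bb 1 = -(1/2) := by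
      show -(aa 1)/(2*((0:ℕ):ℝ)+1) = -(1/2)
      rw [haa1]; norm_num
    have ht1 : t 1 = π/4 * c := by
      rw [htdef]
      simp only [haa1, hbb1, pow_one]
      ring
    rw [hgdef]
    simp only [aa_zero, pow_zero]
    rw [ht1]
    have hbb0 : bb 0 = 1 := rfl
    rw [hbb0]
    field_simp
    ring
  have hshift2 : HasSum (fun n => g (n+1)) ((4:ℝ)/3 * (K + E - (K - E)/c) - π) := by
    have := (hasSum_nat_add_iff' (f := g) 1).2 hcomb
    simpa [hg0] using this
  have hneg := hshift2.neg
  have hfun : (fun n => -(g (n+1))) = (fun i : ℕ =>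
        π * (1 / ((2 * (i : ℝ) + 1) * ((i : ℝ) + 2))
          * ((Nat.doubleFactorial (2 * i + 1) : ℝ) / (Nat.doubleFactorial (2 * i + 2))) ^ 2)
          * k ^ (2 * (i + 1))) := by
    funext n
    rw [df_ratio]
    have hkpow : k ^ (2*(n+1)) = c^(n+1) := by rw [hcdef, pow_mul]
    rw [hkpow]
    set a := aa (n+1) with hadef
    have haa2 : aa (n+2) = a * ((2*(n:ℝ)+3)/(2*(n:ℝ)+4)) := by
      rw [show n+2 = (n+1)+1 from rfl, aa_succ (n+1), hadef]
      congr 1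
      push_cast
      ring
    have hbb1 : bb (n+1) = -a/(2*(n:ℝ)+1) := rfl
    have hbb2 : bb (n+2) = -(aa (n+2))/(2*(n:ℝ)+3) := by
      show -(aa (n+2))/(2*((n+1:ℕ):ℝ)+1) = -(aa (n+2))/(2*(n:ℝ)+3)
      congr 1
      push_cast
      ring
    rw [hgdef]
    simp only
    rw [htdef]
    simp only
    rw [haa2, hbb1, hbb2, haa2]
    have h1 : (2*(n:ℝ)+1) ≠ 0 := by positivity
    have h3 : (2*(n:ℝ)+3) ≠ 0 := by positivity
    have h4 : (2*(n:ℝ)+4) ≠ 0 := by positivity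
    have h5 : ((n:ℝ)+2) ≠ 0 := by positivity
    have hpow : c^(n+1+1) = c^(n+1) * c := by rw [pow_succ]
    rw [hpow]
    field_simp
    ring
  rw [hfun] at hneg
  have hsum_eq : -((4:ℝ)/3 * (K + E - (K - E)/c) - π)
      = π - 4/3 * (K + E - (K - E)/c) := by ring
  rw [hsum_eq] at hneg
  exact hneg
end

section
/- Let f : (α, β) → ℝ be n-times differentiable with f^{(n)} increasing on (α, β), and suppose the one-sided limits f^{(i)}(α⁺) exist for i = 0,…,n and f(β⁻) exists. Then for every x ∈ (α, β), f(x) < T_{n-1}(x) + ((x-α)/(β-α))ⁿ·(f(β⁻) - T_{n-1}(β)), where T_{n-1}(x) = ∑_{i=0}^{n-1} f^{(i)}(α⁺)(x-α)^i/i! is the Taylor polynomial at α⁺ of degree n-1 (case n ≥ 1). -/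
open Real

open Set Filter
open Set Filter

-- aux 1: negative derivative on (α,ξ), limit 0 at α⁺ ⇒ negative
lemma negAux (h h' : ℝ → ℝ) (α ξ : ℝ)
    (hd : ∀ t ∈ Ioo α ξ, HasDerivAt h (h' t) t)
    (hneg : ∀ t ∈ Ioo α ξ, h' t < 0)
    (h0 : Tendsto h (nhdsWithin α (Ioi α)) (nhds 0)) :
    ∀ x ∈ Ioo α ξ, h x < 0 := by
  have hanti : StrictAntiOn h (Ioo α ξ) := by
    apply StrictAntiOn.mono (s := Ioo α ξ) ?_ le_rfl
    apply strictAntiOn_of_deriv_neg (convex_Ioo α ξ)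
    · exact fun t ht => (hd t ht).differentiableAt.continuousAt.continuousWithinAt
    · intro t ht
      rw [interior_Ioo] at ht
      rw [(hd t ht).deriv]; exact hneg t ht
  intro x hx
  set t₀ := (α + x)/2 with ht₀def
  have hαx := hx.1
  have ht₀ : t₀ ∈ Ioo α x := ⟨by linarith, by linarith⟩
  have ht₀' : t₀ ∈ Ioo α ξ := ⟨ht₀.1, lt_trans ht₀.2 hx.2⟩
  have h1 : h x < h t₀ := hanti ht₀' hx ht₀.2
  have h2 : h t₀ ≤ 0 := by
    refine ge_of_tendsto h0 ?_
    filter_upwards [Ioo_mem_nhdsGT_of_mem ⟨le_rfl, ht₀.1⟩] with t ht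
    exact le_of_lt (hanti ⟨ht.1, lt_trans ht.2 ht₀'.2⟩ ht₀' ht.2)
  linarith

-- aux 2: sign-change lemma
lemma signLemma (α β : ℝ) (n : ℕ) (g : ℕ → ℝ → ℝ)
    (hderiv : ∀ i < n, ∀ x ∈ Ioo α β, HasDerivAt (g i) (g (i+1) x) x)
    (hlim : ∀ i < n, Tendsto (g i) (nhdsWithin α (Ioi α)) (nhds 0))
    (hmono : StrictMonoOn (g n) (Ioo α β)) :
    ∀ x ∈ Ioo α β, ∀ y ∈ Ioo α β, x < y → g 0 y ≤ 0 → g 0 x < 0 := by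
  induction n generalizing g with
  | zero =>
    intro x hx y hy hxy hy0
    exact lt_of_lt_of_le (hmono hx hy hxy) hy0
  | succ n ih =>
    have N1 : ∀ x ∈ Ioo α β, ∀ y ∈ Ioo α β, x < y → g 1 y ≤ 0 → g 1 x < 0 := by
      refine ih (fun i => g (i+1)) ?_ ?_ hmono
      · exact fun i hi x hx => hderiv (i+1) (Nat.succ_lt_succ hi) x hx
      · exact fun i hi => hlim (i+1) (Nat.succ_lt_succ hi)
    intro x hx y hy hxy hy0
    by_cases hx0 : g 0 x < 0
    · exact hx0
    push_neg at hx0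
    -- MVT on [x,y]
    have hsub : Icc x y ⊆ Ioo α β := Icc_subset_Ioo hx.1 hy.2
    obtain ⟨ξ, hξ, hslope⟩ := exists_hasDerivAt_eq_slope (g 0) (g 1) hxy
      (fun t ht => ((hderiv 0 n.succ_pos t (hsub ht)).differentiableAt.continuousAt).continuousWithinAt)
      (fun t ht => hderiv 0 n.succ_pos t (hsub (Ioo_subset_Icc_self ht)))
    have hξβ : ξ ∈ Ioo α β := hsub (Ioo_subset_Icc_self hξ)
    have hξneg : g 1 ξ ≤ 0 := by
      rw [hslope]
      apply div_nonpos_of_nonpos_of_nonneg <;> linarith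
    have hneg : ∀ t ∈ Ioo α ξ, g 1 t < 0 := fun t ht =>
      N1 t ⟨ht.1, lt_trans ht.2 hξβ.2⟩ ξ hξβ ht.2 hξneg
    exact absurd (negAux (g 0) (g 1) α ξ
      (fun t ht => hderiv 0 n.succ_pos t ⟨ht.1, lt_trans ht.2 hξβ.2⟩) hneg (hlim 0 n.succ_pos)
      x ⟨hx.1, hξ.1⟩) (not_lt.mpr hx0)

-- aux 3: derivative of the polynomial part
lemma polyDeriv (α c : ℝ) (n i : ℕ) (hi : i < n) (L : ℕ → ℝ) (x : ℝ) :
    HasDerivAt (fun x => (∑ j ∈ Finset.range (n-i), L (i+j) * (x-α)^j / (Nat.factorial j))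
        + c * (n.descFactorial i) * (x-α)^(n-i))
      ((∑ j ∈ Finset.range (n-(i+1)), L ((i+1)+j) * (x-α)^j / (Nat.factorial j))
        + c * (n.descFactorial (i+1)) * (x-α)^(n-(i+1))) x := by
  obtain ⟨m, hm⟩ : ∃ m, n - i = m + 1 := ⟨n - i - 1, by omega⟩
  have hpow : ∀ j : ℕ, HasDerivAt (fun x => (x-α)^j) (j*(x-α)^(j-1)) x := by
    intro j
    simpa [Pi.pow_def] using ((hasDerivAt_id x).sub_const α).pow j
  have h1 : HasDerivAt (fun x => ∑ j ∈ Finset.range (n-i), L (i+j) * (x-α)^j / (Nat.factorial j))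
      (∑ j ∈ Finset.range (n-i), L (i+j) * (j*(x-α)^(j-1)) / (Nat.factorial j)) x :=
    HasDerivAt.fun_sum (fun j _ => ((hpow j).const_mul (L (i+j))).div_const _)
  have h2 : HasDerivAt (fun x => c * (n.descFactorial i) * (x-α)^(n-i))
      (c * (n.descFactorial i) * (((n-i : ℕ))*(x-α)^(n-i-1))) x :=
    (hpow (n-i)).const_mul _
  have e1 : ∑ j ∈ Finset.range (n-i), L (i+j) * (j*(x-α)^(j-1)) / (Nat.factorial j)
      = ∑ j ∈ Finset.range (n-(i+1)), L ((i+1)+j) * (x-α)^j / (Nat.factorial j) := by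
    rw [hm, Finset.sum_range_succ']
    have hm' : n - (i+1) = m := by omega
    rw [hm']
    simp only [Nat.cast_zero, zero_mul, mul_zero, zero_div, add_zero]
    refine Finset.sum_congr rfl fun j _ => ?_
    have : i + (j+1) = (i+1) + j := by omega
    rw [this, Nat.factorial_succ, Nat.add_sub_cancel]
    have hj : (Nat.factorial j : ℝ) ≠ 0 := Nat.cast_ne_zero.mpr (Nat.factorial_ne_zero j)
    push_cast
    field_simp
  have e2 : c * (n.descFactorial i) * (((n-i : ℕ))*(x-α)^(n-i-1))
      = c * (n.descFactorial (i+1)) * (x-α)^(n-(i+1)) := by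
    have h3 : n - (i+1) = n - i - 1 := by omega
    rw [Nat.descFactorial_succ, h3]
    push_cast
    ring
  rw [e1] at h1
  rw [e2] at h2
  exact h1.add h2

open scoped Topology

theorem wu_debnath (f : ℝ → ℝ) (α β : ℝ) (hαβ : α < β) (n : ℕ) (hn : 1 ≤ n)
    (hdiff : ∀ i < n, DifferentiableOn ℝ (iteratedDeriv i f) (Set.Ioo α β))
    (hmono : StrictMonoOn (iteratedDeriv n f) (Set.Ioo α β))
    (L : ℕ → ℝ)
    (hL : ∀ i ≤ n, Filter.Tendsto (iteratedDeriv i f) (nhdsWithin α (Set.Ioi α)) (nhds (L i)))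
    (M : ℝ)
    (hM : Filter.Tendsto f (nhdsWithin β (Set.Iio β)) (nhds M)) :
    ∀ x ∈ Set.Ioo α β,
      f x < (∑ i ∈ Finset.range n, L i * (x - α) ^ i / (Nat.factorial i))
        + ((x - α) / (β - α)) ^ n
          * (M - ∑ i ∈ Finset.range n, L i * (β - α) ^ i / (Nat.factorial i)) := by
  have hba : (0:ℝ) < β - α := by linarith
  set T : ℝ → ℝ := fun x => ∑ i ∈ Finset.range n, L i * (x - α) ^ i / (Nat.factorial i) with hT
  set c : ℝ := (M - T β) / (β - α) ^ n with hc
  set g : ℕ → ℝ → ℝ := fun i x => iteratedDeriv i f x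
      - (∑ j ∈ Finset.range (n-i), L (i+j) * (x-α)^j / (Nat.factorial j))
      - c * (n.descFactorial i) * (x-α)^(n-i) with hg
  -- derivative relation
  have hderiv : ∀ i < n, ∀ x ∈ Ioo α β, HasDerivAt (g i) (g (i+1) x) x := by
    intro i hi x hx
    have hf : HasDerivAt (iteratedDeriv i f) (iteratedDeriv (i+1) f x) x := by
      rw [iteratedDeriv_succ]
      exact ((hdiff i hi x hx).differentiableAt (isOpen_Ioo.mem_nhds hx)).hasDerivAt
    have h2 := hf.sub (polyDeriv α c n i hi L x)
    simp only [hg, sub_sub]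
    exact h2
  -- limits at α
  have hlim : ∀ i < n, Tendsto (g i) (nhdsWithin α (Ioi α)) (nhds 0) := by
    intro i hi
    have hcont : Continuous (fun x : ℝ =>
        (∑ j ∈ Finset.range (n-i), L (i+j) * (x-α)^j / (Nat.factorial j))
          + c * (n.descFactorial i) * (x-α)^(n-i)) := by fun_prop
    have hval : (∑ j ∈ Finset.range (n-i), L (i+j) * (α-α)^j / (Nat.factorial j))
        + c * (n.descFactorial i) * (α-α)^(n-i) = L i := by
      obtain ⟨m, hm⟩ : ∃ m, n - i = m + 1 := ⟨n-i-1, by omega⟩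
      rw [hm, Finset.sum_range_succ']
      simp [sub_self, zero_pow]
    have hpoly : Tendsto (fun x : ℝ =>
        (∑ j ∈ Finset.range (n-i), L (i+j) * (x-α)^j / (Nat.factorial j))
          + c * (n.descFactorial i) * (x-α)^(n-i)) (nhdsWithin α (Ioi α)) (nhds (L i)) := by
      have := (hcont.tendsto α).mono_left (nhdsWithin_le_nhds (s := Ioi α))
      rwa [hval] at this
    have h3 := (hL i hi.le).sub hpoly
    rw [sub_self] at h3
    simp only [hg, sub_sub]
    exact h3
  -- strict mono of g n
  have hmono' : StrictMonoOn (g n) (Ioo α β) := by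
    intro a ha b hb hab
    have := hmono ha hb hab
    simp only [hg, Nat.sub_self, Finset.range_zero, Finset.sum_empty, pow_zero, mul_one]
    linarith
  -- limit of g 0 at β
  have hβlim : Tendsto (g 0) (nhdsWithin β (Iio β)) (nhds 0) := by
    have hcont : Continuous (fun x : ℝ =>
        (∑ j ∈ Finset.range (n-0), L (0+j) * (x-α)^j / (Nat.factorial j))
          + c * (n.descFactorial 0) * (x-α)^(n-0)) := by fun_prop
    have hval : (∑ j ∈ Finset.range (n-0), L (0+j) * (β-α)^j / (Nat.factorial j))
        + c * (n.descFactorial 0) * (β-α)^(n-0) = M := by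
      simp only [Nat.sub_zero, zero_add, Nat.descFactorial_zero, Nat.cast_one, mul_one, one_mul]
      have h4 : c * (β-α)^n = M - T β := by
        rw [hc]
        field_simp
      have hTβ : ∑ j ∈ Finset.range n, L j * (β-α)^j / (Nat.factorial j) = T β := rfl
      rw [hTβ, h4]
      ring
    have hpoly : Tendsto (fun x : ℝ =>
        (∑ j ∈ Finset.range (n-0), L (0+j) * (x-α)^j / (Nat.factorial j))
          + c * (n.descFactorial 0) * (x-α)^(n-0)) (nhdsWithin β (Iio β)) (nhds M) := by
      have := (hcont.tendsto β).mono_left (nhdsWithin_le_nhds (s := Iio β))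
      rwa [hval] at this
    have h3 := hM.sub hpoly
    rw [sub_self] at h3
    simp only [hg, sub_sub, iteratedDeriv_zero]
    exact h3
  -- main argument
  intro x hx
  have key : g 0 x < 0 := by
    set y := (x + β)/2 with hy'
    have hxα := hx.1
    have hxβ := hx.2
    have hy : y ∈ Ioo α β := ⟨by rw [hy']; linarith, by rw [hy']; linarith⟩
    have hxy : x < y := by rw [hy']; linarith
    by_cases h0 : g 0 y ≤ 0
    · exact signLemma α β n g hderiv hlim hmono' x hx y hy hxy h0
    · push_neg at h0
      have hev : ∀ᶠ z in nhdsWithin β (Iio β), g 0 z < g 0 y :=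
        hβlim.eventually_lt_const h0
      have hmem : ∀ᶠ z in nhdsWithin β (Iio β), z ∈ Ioo y β :=
        eventually_of_mem (Ioo_mem_nhdsLT_of_mem ⟨hy.2, le_rfl⟩) (fun _ h => h)
      obtain ⟨z, hz1, hz2⟩ := (hev.and hmem).exists
      have hsub : Icc y z ⊆ Ioo α β := Icc_subset_Ioo hy.1 hz2.2
      have hn0 : 0 < n := hn
      obtain ⟨ξ, hξ, hslope⟩ := exists_hasDerivAt_eq_slope (g 0) (g 1) hz2.1
        (fun t ht => ((hderiv 0 hn0 t (hsub ht)).differentiableAt.continuousAt).continuousWithinAt)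
        (fun t ht => hderiv 0 hn0 t (hsub (Ioo_subset_Icc_self ht)))
      have hξmem : ξ ∈ Ioo α β := hsub (Ioo_subset_Icc_self hξ)
      have hξneg : g 1 ξ < 0 := by
        rw [hslope]
        apply div_neg_of_neg_of_pos
        · linarith
        · linarith [hz2.1]
      obtain ⟨m, hm⟩ : ∃ m, n = m + 1 := ⟨n - 1, by omega⟩
      have N1 : ∀ a ∈ Ioo α β, ∀ b ∈ Ioo α β, a < b → g 1 b ≤ 0 → g 1 a < 0 := by
        refine signLemma α β m (fun i => g (i+1)) ?_ ?_ ?_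
        · exact fun i hi t ht => hderiv (i+1) (by omega) t ht
        · exact fun i hi => hlim (i+1) (by omega)
        · show StrictMonoOn (g (m+1)) (Ioo α β)
          rw [← hm]
          exact hmono'
      have hneg : ∀ t ∈ Ioo α ξ, g 1 t < 0 := fun t ht =>
        N1 t ⟨ht.1, lt_trans ht.2 hξmem.2⟩ ξ hξmem ht.2 hξneg.le
      exact negAux (g 0) (g 1) α ξ
        (fun t ht => hderiv 0 hn0 t ⟨ht.1, lt_trans ht.2 hξmem.2⟩) hneg (hlim 0 hn0)
        x ⟨hxα, lt_trans hxy hξ.1⟩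
  -- final algebra
  have hg0 : g 0 x = f x - T x - c * (x - α)^n := by
    simp only [hg, iteratedDeriv_zero, Nat.sub_zero, zero_add, Nat.descFactorial_zero,
      Nat.cast_one, mul_one, one_mul]
    rfl
  have hTx : T x = ∑ i ∈ Finset.range n, L i * (x-α)^i / (Nat.factorial i) := rfl
  have hTb : T β = ∑ i ∈ Finset.range n, L i * (β-α)^i / (Nat.factorial i) := rfl
  have hpowne : ((β - α))^n ≠ 0 := ne_of_gt (pow_pos hba n)
  have hrw : ((x-α)/(β-α))^n * (M - T β) = c * (x-α)^n := by
    rw [hc, div_pow]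
    field_simp
  rw [← hTx, ← hTb, hrw]
  linarith
end
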